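/- Let G be a finite connected simple graph that is (P7, C7, C4, diamond)-free and contains an induced cycle on 6 vertices. Then G has a clique cutset, or G has a vertex of degree at most 2, or G is isomorphic to the Petersen graph. -/

import Mathlib

open SimpleGraph

/-- `G` contains no induced subgraph isomorphic to `H`. -/
def IndFree {V : Type*} {W : Type*} (G : SimpleGraph V) (H : SimpleGraph W) : Prop :=
  IsEmpty (H ↪g G)

/-- The diamond: `K4` minus one edge. -/
def diamondGraph : SimpleGraph (Fin 4) :=
  fromEdgeSet {s(0,1), s(0,2), s(0,3), s(1,2), s(1,3)}

/-- `G` has a clique cutset: a clique `K` whose removal separates two vertices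
outside `K` which are connected in `G`. -/
def HasCliqueCutset {V : Type*} (G : SimpleGraph V) : Prop :=
  ∃ K : Set V, G.IsClique K ∧ ∃ a b : (Kᶜ : Set V),
    G.Reachable a.1 b.1 ∧ ¬ (G.induce Kᶜ).Reachable a b

/-- The Petersen graph: vertices are the 2-element subsets of a 5-element set,
adjacent exactly when disjoint. -/
def petersenGraph : SimpleGraph {s : Finset (Fin 5) // s.card = 2} where
  Adj a b := Disjoint a.1 b.1
  symm := ⟨fun a b (h : Disjoint a.1 b.1) => h.symm⟩
  loopless := ⟨fun a (h : Disjoint a.1 a.1) => by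
    simp only [disjoint_self, Finset.bot_eq_empty] at h
    have h2 := a.2
    rw [h] at h2
    simp at h2⟩

section Infra

lemma diamond_adj {i j : Fin 4} : diamondGraph.Adj i j ↔
    (s(i,j) = s(0,1) ∨ s(i,j) = s(0,2) ∨ s(i,j) = s(0,3) ∨ s(i,j) = s(1,2) ∨ s(i,j) = s(1,3)) ∧ i ≠ j := by
  simp [diamondGraph, Set.mem_insert_iff, Set.mem_singleton_iff]

instance : DecidableRel diamondGraph.Adj := fun _ _ => decidable_of_iff' _ diamond_adj

instance : DecidableRel (pathGraph 7).Adj := fun _ _ => decidable_of_iff' _ pathGraph_adj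

instance : DecidableRel petersenGraph.Adj :=
  fun a b => inferInstanceAs (Decidable (Disjoint a.1 b.1))

variable {V : Type*} {G : SimpleGraph V}

lemma noC4 (hC4 : IndFree G (cycleGraph 4)) {a b c d : V}
    (hab : G.Adj a b) (hbc : G.Adj b c) (hcd : G.Adj c d) (hda : G.Adj d a)
    (hac : ¬ G.Adj a c) (hbd : ¬ G.Adj b d) (hac' : a ≠ c) (hbd' : b ≠ d) : False := by
  refine hC4.false ⟨⟨![a,b,c,d], ?_⟩, ?_⟩
  · intro i j hij
    fin_cases i <;> fin_cases j <;> simp_all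
  · intro i j
    fin_cases i <;> fin_cases j <;>
      first
      | exact iff_of_true (by assumption) (by decide)
      | exact iff_of_true (SimpleGraph.Adj.symm (by assumption)) (by decide)
      | exact iff_of_false (by assumption) (by decide)
      | exact iff_of_false (fun hq => (by assumption : ¬ G.Adj _ _) hq.symm) (by decide)
      | exact iff_of_false (G.irrefl) (by decide)

lemma noDiamond (hdia : IndFree G diamondGraph) {a b c d : V}
    (hab : G.Adj a b) (hac : G.Adj a c) (had : G.Adj a d) (hbc : G.Adj b c)
    (hbd : G.Adj b d) (hcd : ¬ G.Adj c d) (hcd' : c ≠ d) : False := by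
  refine hdia.false ⟨⟨![a,b,c,d], ?_⟩, ?_⟩
  · intro i j hij
    fin_cases i <;> fin_cases j <;> simp_all
  · intro i j
    fin_cases i <;> fin_cases j <;>
      first
      | exact iff_of_true (by assumption) (by decide)
      | exact iff_of_true (SimpleGraph.Adj.symm (by assumption)) (by decide)
      | exact iff_of_false (by assumption) (by decide)
      | exact iff_of_false (fun hq => (by assumption : ¬ G.Adj _ _) hq.symm) (by decide)
      | exact iff_of_false (G.irrefl) (by decide)

lemma F1 (hc4 : IndFree G (cycleGraph 4)) (hdia : IndFree G diamondGraph) {x y p q : V}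
    (hxy : ¬ G.Adj x y) (hne : x ≠ y) (hpx : G.Adj p x) (hpy : G.Adj p y)
    (hqx : G.Adj q x) (hqy : G.Adj q y) (hpq : p ≠ q) : False := by
  by_cases h : G.Adj p q
  · exact noDiamond hdia h hpx hpy hqx hqy hxy hne
  · exact noC4 hc4 hpx.symm hpy hqy.symm hqx hxy h hne hpq

lemma F2 (hdia : IndFree G diamondGraph) {x y p q : V}
    (hxy : G.Adj x y) (hpx : G.Adj p x) (hpy : G.Adj p y)
    (hqx : G.Adj q x) (hqy : G.Adj q y) (hpq : p ≠ q) (hnpq : ¬ G.Adj p q) : False :=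
  noDiamond hdia hxy hpx.symm hqx.symm hpy.symm hqy.symm hnpq hpq

lemma cutset_gen (hconn : G.Connected) (K S : Set V) (hK : G.IsClique K)
    (a b : V) (ha : a ∈ S) (hb : b ∉ S) (hbK : b ∉ K) (hSK : ∀ x ∈ S, x ∉ K)
    (hcl : ∀ x ∈ S, ∀ y, G.Adj x y → y ∈ S ∨ y ∈ K) : HasCliqueCutset G := by
  refine ⟨K, hK, ⟨a, hSK a ha⟩, ⟨b, hbK⟩, hconn.preconnected a b, fun hre => ?_⟩
  have key : ∀ (u v : (Kᶜ : Set V)) (_ : (G.induce Kᶜ).Walk u v), u.1 ∈ S → v.1 ∈ S := by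
    intro u v p
    induction p with
    | nil => exact id
    | @cons u w v h p ih =>
      intro hu
      apply ih
      have hadj : G.Adj u.1 w.1 := h
      rcases hcl u.1 hu w.1 hadj with h1 | h2
      · exact h1
      · exact absurd h2 w.2
  obtain ⟨w⟩ := hre
  exact hb (key _ _ w ha)

lemma third_nbr [Fintype V] {v : V} (h : 2 < (G.neighborSet v).ncard) (x y : V) :
    ∃ z, G.Adj v z ∧ z ≠ x ∧ z ≠ y := by
  by_contra hc
  push_neg at hc
  have hsub : G.neighborSet v ⊆ {x, y} := by
    intro z hz
    by_cases hx : z = x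
    · exact Or.inl hx
    · exact Or.inr (hc z hz hx)
  have h1 := Set.ncard_le_ncard hsub (Set.toFinite _)
  have h2 : ({x, y} : Set V).ncard ≤ 2 := by
    refine le_trans (Set.ncard_insert_le _ _) ?_
    simp [Set.ncard_singleton]
  omega

/-- A labelled induced 6-cycle. -/
structure C6L (G : SimpleGraph V) where
  a : V
  b : V
  c : V
  d : V
  e : V
  f : V
  ab : G.Adj a b
  bc : G.Adj b c
  cd : G.Adj c d
  de : G.Adj d e
  ef : G.Adj e f
  fa : G.Adj f a
  ac : ¬ G.Adj a c
  ad : ¬ G.Adj a d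
  ae : ¬ G.Adj a e
  bd : ¬ G.Adj b d
  be : ¬ G.Adj b e
  bf : ¬ G.Adj b f
  ce : ¬ G.Adj c e
  cf : ¬ G.Adj c f
  df : ¬ G.Adj d f

def C6L.rot (L : C6L G) : C6L G :=
  ⟨L.b, L.c, L.d, L.e, L.f, L.a, L.bc, L.cd, L.de, L.ef, L.fa, L.ab,
   L.bd, L.be, L.bf, L.ce, L.cf, fun h => L.ac h.symm, L.df,
   fun h => L.ad h.symm, fun h => L.ae h.symm⟩

def C6L.refl (L : C6L G) : C6L G :=
  ⟨L.b, L.a, L.f, L.e, L.d, L.c, L.ab.symm, L.fa.symm, L.ef.symm, L.de.symm, L.cd.symm, L.bc.symm,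
   L.bf, L.be, L.bd, L.ae, L.ad, L.ac, fun h => L.df h.symm,
   fun h => L.cf h.symm, fun h => L.ce h.symm⟩

/-- Context: all standing hypotheses. -/
structure Ctx (G : SimpleGraph V) : Prop where
  conn : G.Connected
  p7 : IndFree G (pathGraph 7)
  c7 : IndFree G (cycleGraph 7)
  c4 : IndFree G (cycleGraph 4)
  dia : IndFree G diamondGraph
  ncut : ¬ HasCliqueCutset G
  deg : ∀ v : V, 2 < (G.neighborSet v).ncard

lemma dist2 (C : Ctx G) (L : C6L G) {u : V}
    (h1 : G.Adj u L.a) (h2 : G.Adj u L.c) (hub : u ≠ L.b) : False :=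
  F1 C.c4 C.dia L.ac (fun h => L.ad (by rw [h]; exact L.cd)) L.ab.symm L.bc h1 h2
    (fun h => hub h.symm)

end Infra

section Forb
variable {V : Type*} {G : SimpleGraph V}

set_option maxHeartbeats 1000000 in
lemma noP7 (h : IndFree G (pathGraph 7)) (x0 x1 x2 x3 x4 x5 x6 : V)
    (a01 : G.Adj x0 x1) (a12 : G.Adj x1 x2) (a23 : G.Adj x2 x3) (a34 : G.Adj x3 x4) (a45 : G.Adj x4 x5) (a56 : G.Adj x5 x6) (n02 : ¬ G.Adj x0 x2) (n03 : ¬ G.Adj x0 x3) (n04 : ¬ G.Adj x0 x4) (n05 : ¬ G.Adj x0 x5) (n06 : ¬ G.Adj x0 x6) (n13 : ¬ G.Adj x1 x3) (n14 : ¬ G.Adj x1 x4) (n15 : ¬ G.Adj x1 x5) (n16 : ¬ G.Adj x1 x6) (n24 : ¬ G.Adj x2 x4) (n25 : ¬ G.Adj x2 x5) (n26 : ¬ G.Adj x2 x6) (n35 : ¬ G.Adj x3 x5) (n36 : ¬ G.Adj x3 x6) (n46 : ¬ G.Adj x4 x6) : False := by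
  have e02 : x0 ≠ x2 := fun hq => n03 (hq.symm ▸ a23)
  have e03 : x0 ≠ x3 := fun hq => n04 (hq.symm ▸ a34)
  have e04 : x0 ≠ x4 := fun hq => n05 (hq.symm ▸ a45)
  have e05 : x0 ≠ x5 := fun hq => n06 (hq.symm ▸ a56)
  have e06 : x0 ≠ x6 := fun hq => n05 (hq.symm ▸ (a56).symm)
  have e13 : x1 ≠ x3 := fun hq => n14 (hq.symm ▸ a34)
  have e14 : x1 ≠ x4 := fun hq => n15 (hq.symm ▸ a45)
  have e15 : x1 ≠ x5 := fun hq => n16 (hq.symm ▸ a56)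
  have e16 : x1 ≠ x6 := fun hq => n06 (hq ▸ a01)
  have e24 : x2 ≠ x4 := fun hq => n25 (hq.symm ▸ a45)
  have e25 : x2 ≠ x5 := fun hq => n26 (hq.symm ▸ a56)
  have e26 : x2 ≠ x6 := fun hq => n16 (hq ▸ a12)
  have e35 : x3 ≠ x5 := fun hq => n36 (hq.symm ▸ a56)
  have e36 : x3 ≠ x6 := fun hq => n26 (hq ▸ a23)
  have e46 : x4 ≠ x6 := fun hq => n36 (hq ▸ a34)
  refine h.false ⟨⟨![x0, x1, x2, x3, x4, x5, x6], ?_⟩, ?_⟩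
  · intro i j hij
    fin_cases i <;> fin_cases j
    · rfl
    · exact absurd (show x0 = x1 from hij) (a01.ne)
    · exact absurd (show x0 = x2 from hij) e02
    · exact absurd (show x0 = x3 from hij) e03
    · exact absurd (show x0 = x4 from hij) e04
    · exact absurd (show x0 = x5 from hij) e05
    · exact absurd (show x0 = x6 from hij) e06
    · exact absurd (show x1 = x0 from hij) (a01.ne')
    · rfl
    · exact absurd (show x1 = x2 from hij) (a12.ne)
    · exact absurd (show x1 = x3 from hij) e13
    · exact absurd (show x1 = x4 from hij) e14
    · exact absurd (show x1 = x5 from hij) e15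
    · exact absurd (show x1 = x6 from hij) e16
    · exact absurd (show x2 = x0 from hij) (fun hq => e02 hq.symm)
    · exact absurd (show x2 = x1 from hij) (a12.ne')
    · rfl
    · exact absurd (show x2 = x3 from hij) (a23.ne)
    · exact absurd (show x2 = x4 from hij) e24
    · exact absurd (show x2 = x5 from hij) e25
    · exact absurd (show x2 = x6 from hij) e26
    · exact absurd (show x3 = x0 from hij) (fun hq => e03 hq.symm)
    · exact absurd (show x3 = x1 from hij) (fun hq => e13 hq.symm)
    · exact absurd (show x3 = x2 from hij) (a23.ne')
    · rfl
    · exact absurd (show x3 = x4 from hij) (a34.ne)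
    · exact absurd (show x3 = x5 from hij) e35
    · exact absurd (show x3 = x6 from hij) e36
    · exact absurd (show x4 = x0 from hij) (fun hq => e04 hq.symm)
    · exact absurd (show x4 = x1 from hij) (fun hq => e14 hq.symm)
    · exact absurd (show x4 = x2 from hij) (fun hq => e24 hq.symm)
    · exact absurd (show x4 = x3 from hij) (a34.ne')
    · rfl
    · exact absurd (show x4 = x5 from hij) (a45.ne)
    · exact absurd (show x4 = x6 from hij) e46
    · exact absurd (show x5 = x0 from hij) (fun hq => e05 hq.symm)
    · exact absurd (show x5 = x1 from hij) (fun hq => e15 hq.symm)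
    · exact absurd (show x5 = x2 from hij) (fun hq => e25 hq.symm)
    · exact absurd (show x5 = x3 from hij) (fun hq => e35 hq.symm)
    · exact absurd (show x5 = x4 from hij) (a45.ne')
    · rfl
    · exact absurd (show x5 = x6 from hij) (a56.ne)
    · exact absurd (show x6 = x0 from hij) (fun hq => e06 hq.symm)
    · exact absurd (show x6 = x1 from hij) (fun hq => e16 hq.symm)
    · exact absurd (show x6 = x2 from hij) (fun hq => e26 hq.symm)
    · exact absurd (show x6 = x3 from hij) (fun hq => e36 hq.symm)
    · exact absurd (show x6 = x4 from hij) (fun hq => e46 hq.symm)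
    · exact absurd (show x6 = x5 from hij) (a56.ne')
    · rfl
  · intro i j
    fin_cases i <;> fin_cases j
    · exact iff_of_false (G.irrefl) (by decide)
    · exact iff_of_true a01 (by decide)
    · exact iff_of_false n02 (by decide)
    · exact iff_of_false n03 (by decide)
    · exact iff_of_false n04 (by decide)
    · exact iff_of_false n05 (by decide)
    · exact iff_of_false n06 (by decide)
    · exact iff_of_true (a01.symm) (by decide)
    · exact iff_of_false (G.irrefl) (by decide)
    · exact iff_of_true a12 (by decide)
    · exact iff_of_false n13 (by decide)
    · exact iff_of_false n14 (by decide)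
    · exact iff_of_false n15 (by decide)
    · exact iff_of_false n16 (by decide)
    · exact iff_of_false (fun hq => n02 hq.symm) (by decide)
    · exact iff_of_true (a12.symm) (by decide)
    · exact iff_of_false (G.irrefl) (by decide)
    · exact iff_of_true a23 (by decide)
    · exact iff_of_false n24 (by decide)
    · exact iff_of_false n25 (by decide)
    · exact iff_of_false n26 (by decide)
    · exact iff_of_false (fun hq => n03 hq.symm) (by decide)
    · exact iff_of_false (fun hq => n13 hq.symm) (by decide)
    · exact iff_of_true (a23.symm) (by decide)
    · exact iff_of_false (G.irrefl) (by decide)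
    · exact iff_of_true a34 (by decide)
    · exact iff_of_false n35 (by decide)
    · exact iff_of_false n36 (by decide)
    · exact iff_of_false (fun hq => n04 hq.symm) (by decide)
    · exact iff_of_false (fun hq => n14 hq.symm) (by decide)
    · exact iff_of_false (fun hq => n24 hq.symm) (by decide)
    · exact iff_of_true (a34.symm) (by decide)
    · exact iff_of_false (G.irrefl) (by decide)
    · exact iff_of_true a45 (by decide)
    · exact iff_of_false n46 (by decide)
    · exact iff_of_false (fun hq => n05 hq.symm) (by decide)
    · exact iff_of_false (fun hq => n15 hq.symm) (by decide)
    · exact iff_of_false (fun hq => n25 hq.symm) (by decide)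
    · exact iff_of_false (fun hq => n35 hq.symm) (by decide)
    · exact iff_of_true (a45.symm) (by decide)
    · exact iff_of_false (G.irrefl) (by decide)
    · exact iff_of_true a56 (by decide)
    · exact iff_of_false (fun hq => n06 hq.symm) (by decide)
    · exact iff_of_false (fun hq => n16 hq.symm) (by decide)
    · exact iff_of_false (fun hq => n26 hq.symm) (by decide)
    · exact iff_of_false (fun hq => n36 hq.symm) (by decide)
    · exact iff_of_false (fun hq => n46 hq.symm) (by decide)
    · exact iff_of_true (a56.symm) (by decide)
    · exact iff_of_false (G.irrefl) (by decide)

set_option maxHeartbeats 1000000 in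
lemma noC7 (h : IndFree G (cycleGraph 7)) (x0 x1 x2 x3 x4 x5 x6 : V)
    (a01 : G.Adj x0 x1) (a12 : G.Adj x1 x2) (a23 : G.Adj x2 x3) (a34 : G.Adj x3 x4) (a45 : G.Adj x4 x5) (a56 : G.Adj x5 x6) (a06 : G.Adj x0 x6) (n02 : ¬ G.Adj x0 x2) (n03 : ¬ G.Adj x0 x3) (n04 : ¬ G.Adj x0 x4) (n05 : ¬ G.Adj x0 x5) (n13 : ¬ G.Adj x1 x3) (n14 : ¬ G.Adj x1 x4) (n15 : ¬ G.Adj x1 x5) (n16 : ¬ G.Adj x1 x6) (n24 : ¬ G.Adj x2 x4) (n25 : ¬ G.Adj x2 x5) (n26 : ¬ G.Adj x2 x6) (n35 : ¬ G.Adj x3 x5) (n36 : ¬ G.Adj x3 x6) (n46 : ¬ G.Adj x4 x6) : False := by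
  have e02 : x0 ≠ x2 := fun hq => n03 (hq.symm ▸ a23)
  have e03 : x0 ≠ x3 := fun hq => n04 (hq.symm ▸ a34)
  have e04 : x0 ≠ x4 := fun hq => n05 (hq.symm ▸ a45)
  have e05 : x0 ≠ x5 := fun hq => n04 (hq.symm ▸ (a45).symm)
  have e13 : x1 ≠ x3 := fun hq => n14 (hq.symm ▸ a34)
  have e14 : x1 ≠ x4 := fun hq => n15 (hq.symm ▸ a45)
  have e15 : x1 ≠ x5 := fun hq => n16 (hq.symm ▸ a56)
  have e16 : x1 ≠ x6 := fun hq => n15 (hq.symm ▸ (a56).symm)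
  have e24 : x2 ≠ x4 := fun hq => n25 (hq.symm ▸ a45)
  have e25 : x2 ≠ x5 := fun hq => n26 (hq.symm ▸ a56)
  have e26 : x2 ≠ x6 := fun hq => n16 (hq ▸ a12)
  have e35 : x3 ≠ x5 := fun hq => n36 (hq.symm ▸ a56)
  have e36 : x3 ≠ x6 := fun hq => n26 (hq ▸ a23)
  have e46 : x4 ≠ x6 := fun hq => n36 (hq ▸ a34)
  refine h.false ⟨⟨![x0, x1, x2, x3, x4, x5, x6], ?_⟩, ?_⟩
  · intro i j hij
    fin_cases i <;> fin_cases j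
    · rfl
    · exact absurd (show x0 = x1 from hij) (a01.ne)
    · exact absurd (show x0 = x2 from hij) e02
    · exact absurd (show x0 = x3 from hij) e03
    · exact absurd (show x0 = x4 from hij) e04
    · exact absurd (show x0 = x5 from hij) e05
    · exact absurd (show x0 = x6 from hij) (a06.ne)
    · exact absurd (show x1 = x0 from hij) (a01.ne')
    · rfl
    · exact absurd (show x1 = x2 from hij) (a12.ne)
    · exact absurd (show x1 = x3 from hij) e13
    · exact absurd (show x1 = x4 from hij) e14
    · exact absurd (show x1 = x5 from hij) e15
    · exact absurd (show x1 = x6 from hij) e16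
    · exact absurd (show x2 = x0 from hij) (fun hq => e02 hq.symm)
    · exact absurd (show x2 = x1 from hij) (a12.ne')
    · rfl
    · exact absurd (show x2 = x3 from hij) (a23.ne)
    · exact absurd (show x2 = x4 from hij) e24
    · exact absurd (show x2 = x5 from hij) e25
    · exact absurd (show x2 = x6 from hij) e26
    · exact absurd (show x3 = x0 from hij) (fun hq => e03 hq.symm)
    · exact absurd (show x3 = x1 from hij) (fun hq => e13 hq.symm)
    · exact absurd (show x3 = x2 from hij) (a23.ne')
    · rfl
    · exact absurd (show x3 = x4 from hij) (a34.ne)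
    · exact absurd (show x3 = x5 from hij) e35
    · exact absurd (show x3 = x6 from hij) e36
    · exact absurd (show x4 = x0 from hij) (fun hq => e04 hq.symm)
    · exact absurd (show x4 = x1 from hij) (fun hq => e14 hq.symm)
    · exact absurd (show x4 = x2 from hij) (fun hq => e24 hq.symm)
    · exact absurd (show x4 = x3 from hij) (a34.ne')
    · rfl
    · exact absurd (show x4 = x5 from hij) (a45.ne)
    · exact absurd (show x4 = x6 from hij) e46
    · exact absurd (show x5 = x0 from hij) (fun hq => e05 hq.symm)
    · exact absurd (show x5 = x1 from hij) (fun hq => e15 hq.symm)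
    · exact absurd (show x5 = x2 from hij) (fun hq => e25 hq.symm)
    · exact absurd (show x5 = x3 from hij) (fun hq => e35 hq.symm)
    · exact absurd (show x5 = x4 from hij) (a45.ne')
    · rfl
    · exact absurd (show x5 = x6 from hij) (a56.ne)
    · exact absurd (show x6 = x0 from hij) (a06.ne')
    · exact absurd (show x6 = x1 from hij) (fun hq => e16 hq.symm)
    · exact absurd (show x6 = x2 from hij) (fun hq => e26 hq.symm)
    · exact absurd (show x6 = x3 from hij) (fun hq => e36 hq.symm)
    · exact absurd (show x6 = x4 from hij) (fun hq => e46 hq.symm)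
    · exact absurd (show x6 = x5 from hij) (a56.ne')
    · rfl
  · intro i j
    fin_cases i <;> fin_cases j
    · exact iff_of_false (G.irrefl) (by decide)
    · exact iff_of_true a01 (by decide)
    · exact iff_of_false n02 (by decide)
    · exact iff_of_false n03 (by decide)
    · exact iff_of_false n04 (by decide)
    · exact iff_of_false n05 (by decide)
    · exact iff_of_true a06 (by decide)
    · exact iff_of_true (a01.symm) (by decide)
    · exact iff_of_false (G.irrefl) (by decide)
    · exact iff_of_true a12 (by decide)
    · exact iff_of_false n13 (by decide)
    · exact iff_of_false n14 (by decide)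
    · exact iff_of_false n15 (by decide)
    · exact iff_of_false n16 (by decide)
    · exact iff_of_false (fun hq => n02 hq.symm) (by decide)
    · exact iff_of_true (a12.symm) (by decide)
    · exact iff_of_false (G.irrefl) (by decide)
    · exact iff_of_true a23 (by decide)
    · exact iff_of_false n24 (by decide)
    · exact iff_of_false n25 (by decide)
    · exact iff_of_false n26 (by decide)
    · exact iff_of_false (fun hq => n03 hq.symm) (by decide)
    · exact iff_of_false (fun hq => n13 hq.symm) (by decide)
    · exact iff_of_true (a23.symm) (by decide)
    · exact iff_of_false (G.irrefl) (by decide)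
    · exact iff_of_true a34 (by decide)
    · exact iff_of_false n35 (by decide)
    · exact iff_of_false n36 (by decide)
    · exact iff_of_false (fun hq => n04 hq.symm) (by decide)
    · exact iff_of_false (fun hq => n14 hq.symm) (by decide)
    · exact iff_of_false (fun hq => n24 hq.symm) (by decide)
    · exact iff_of_true (a34.symm) (by decide)
    · exact iff_of_false (G.irrefl) (by decide)
    · exact iff_of_true a45 (by decide)
    · exact iff_of_false n46 (by decide)
    · exact iff_of_false (fun hq => n05 hq.symm) (by decide)
    · exact iff_of_false (fun hq => n15 hq.symm) (by decide)
    · exact iff_of_false (fun hq => n25 hq.symm) (by decide)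
    · exact iff_of_false (fun hq => n35 hq.symm) (by decide)
    · exact iff_of_true (a45.symm) (by decide)
    · exact iff_of_false (G.irrefl) (by decide)
    · exact iff_of_true a56 (by decide)
    · exact iff_of_true (a06.symm) (by decide)
    · exact iff_of_false (fun hq => n16 hq.symm) (by decide)
    · exact iff_of_false (fun hq => n26 hq.symm) (by decide)
    · exact iff_of_false (fun hq => n36 hq.symm) (by decide)
    · exact iff_of_false (fun hq => n46 hq.symm) (by decide)
    · exact iff_of_true (a56.symm) (by decide)
    · exact iff_of_false (G.irrefl) (by decide)

end Forb

section Claim1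
variable {V : Type*} [Fintype V] {G : SimpleGraph V}

lemma noE_S3 (C : Ctx G) (L : C6L G) {u w : V}
    (hua : G.Adj u L.a) (hub : G.Adj u L.b) (huw : G.Adj u w)
    (hnuc : ¬ G.Adj u L.c) (hnud : ¬ G.Adj u L.d) (hnue : ¬ G.Adj u L.e) (hnuf : ¬ G.Adj u L.f)
    (hnwa : ¬ G.Adj w L.a) (hnwb : ¬ G.Adj w L.b) (hnwc : ¬ G.Adj w L.c)
    (hwd : G.Adj w L.d) (hnwe : ¬ G.Adj w L.e) (hnwf : ¬ G.Adj w L.f) : False := by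
  have hu_b : u ≠ L.b := hub.ne
  have hu_f : u ≠ L.f := fun h => L.bf (by rw [h] at hub; exact hub.symm)
  have hw_c : w ≠ L.c := fun h => hnwb (by rw [h]; exact L.bc.symm)
  have hw_e : w ≠ L.e := fun h => hnwf (by rw [h]; exact L.ef)
  obtain ⟨x, hfx, hxe, hxa⟩ := third_nbr (C.deg L.f) L.e L.a
  have hx_b : x ≠ L.b := fun h => L.bf (by rw [h] at hfx; exact hfx.symm)
  have hx_c : x ≠ L.c := fun h => L.cf (by rw [h] at hfx; exact hfx.symm)
  have hx_d : x ≠ L.d := fun h => L.df (by rw [h] at hfx; exact hfx.symm)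
  have hx_f : x ≠ L.f := hfx.ne'
  have hx_u : x ≠ u := fun h => hnuf (by rw [h] at hfx; exact hfx.symm)
  have hx_w : x ≠ w := fun h => hnwf (by rw [h] at hfx; exact hfx.symm)
  have hnxd : ¬ G.Adj x L.d := fun h => dist2 C (L.rot.rot.rot) h hfx.symm hxe
  have hnxb : ¬ G.Adj x L.b := fun h => dist2 C (L.rot.rot.rot.rot.rot) hfx.symm h hxa
  have hnux : ¬ G.Adj u x := by
    intro h
    by_cases h2 : G.Adj x L.a
    · exact F2 C.dia hua hub.symm L.ab.symm h.symm h2 (fun hq => hx_b hq.symm)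
        (fun hq => hnxb hq.symm)
    · exact noC4 C.c4 hua L.fa.symm hfx h.symm hnuf (fun hq => h2 hq.symm) hu_f
        (fun hq => hxa hq.symm)
  by_cases hxc : G.Adj x L.c
  · by_cases hxw : G.Adj x w
    · exact noC4 C.c4 hxc L.cd hwd.symm hxw.symm hnxd (fun hq => hnwc hq.symm) hx_d
        (fun hq => hw_c hq.symm)
    · exact noP7 C.p7 L.b u w L.d L.e L.f x hub.symm huw hwd L.de L.ef hfx
        (fun hq => hnwb hq.symm) L.bd L.be L.bf (fun hq => hnxb hq.symm)
        hnud hnue hnuf hnux hnwe hnwf (fun hq => hxw hq.symm) L.df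
        (fun hq => hnxd hq.symm) (fun hq => dist2 C (L.rot.rot) hxc hq.symm hx_d)
  · by_cases hxe2 : G.Adj x L.e
    · by_cases hxw : G.Adj x w
      · exact noC4 C.c4 L.de hxe2.symm hxw hwd (fun hq => hnxd hq.symm)
          (fun hq => hnwe hq.symm) (fun hq => hx_d hq.symm) (fun hq => hw_e hq.symm)
      · exact noP7 C.p7 L.c L.d w u L.a L.f x L.cd hwd.symm huw.symm hua L.fa.symm hfx
          (fun hq => hnwc hq.symm) (fun hq => hnuc hq.symm) (fun hq => L.ac hq.symm) L.cf
          (fun hq => hxc hq.symm) (fun hq => hnud hq.symm) (fun hq => L.ad hq.symm) L.df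
          (fun hq => hnxd hq.symm) hnwa hnwf (fun hq => hxw hq.symm)
          hnuf hnux (fun hq => dist2 C (L.rot.rot.rot.rot) hxe2 hq.symm hx_f)
    · exact noP7 C.p7 u L.b L.c L.d L.e L.f x hub L.bc L.cd L.de L.ef hfx
          hnuc hnud hnue hnuf hnux L.bd L.be L.bf (fun hq => hnxb hq.symm)
          L.ce L.cf (fun hq => hxc hq.symm) L.df (fun hq => hnxd hq.symm)
          (fun hq => hxe2 hq.symm)

lemma noE_E3 (C : Ctx G) (L : C6L G) {u w : V}
    (hua : G.Adj u L.a) (hub : G.Adj u L.b) (huw : G.Adj u w)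
    (hnuc : ¬ G.Adj u L.c) (hnud : ¬ G.Adj u L.d) (hnue : ¬ G.Adj u L.e) (hnuf : ¬ G.Adj u L.f)
    (hnwa : ¬ G.Adj w L.a) (hnwb : ¬ G.Adj w L.b) (hnwc : ¬ G.Adj w L.c)
    (hwd : G.Adj w L.d) (hwe : G.Adj w L.e) (hnwf : ¬ G.Adj w L.f) : False := by
  have hu_c : u ≠ L.c := fun h => L.ac (by rw [h] at hua; exact hua.symm)
  have hw_c : w ≠ L.c := fun h => hnwb (by rw [h]; exact L.bc.symm)
  obtain ⟨x, hcx, hxb, hxd⟩ := third_nbr (C.deg L.c) L.b L.d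
  have hx_a : x ≠ L.a := fun h => L.ac (by rw [h] at hcx; exact hcx.symm)
  have hx_c : x ≠ L.c := hcx.ne'
  have hx_e : x ≠ L.e := fun h => by rw [h] at hcx; exact L.ce hcx
  have hx_f : x ≠ L.f := fun h => by rw [h] at hcx; exact L.cf hcx
  have hx_u : x ≠ u := fun h => by rw [h] at hcx; exact hnuc hcx.symm
  have hx_w : x ≠ w := fun h => by rw [h] at hcx; exact hnwc hcx.symm
  have hnxa : ¬ G.Adj x L.a := fun h => dist2 C L h hcx.symm hxb
  have hnxe : ¬ G.Adj x L.e := fun h => dist2 C (L.rot.rot) hcx.symm h hxd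
  have hnux : ¬ G.Adj u x := by
    intro h
    by_cases h2 : G.Adj x L.b
    · exact F2 C.dia hub hua.symm L.ab h.symm h2 (fun hq => hx_a hq.symm)
        (fun hq => hnxa hq.symm)
    · exact noC4 C.c4 hub L.bc hcx h.symm hnuc (fun hq => h2 hq.symm) hu_c
        (fun hq => hxb hq.symm)
  have hnwx : ¬ G.Adj w x := by
    intro h
    by_cases h3 : G.Adj x L.d
    · exact F2 C.dia hwd hwe.symm L.de.symm h.symm h3 (fun hq => hx_e hq.symm)
        (fun hq => hnxe hq.symm)
    · exact noC4 C.c4 hwd L.cd.symm hcx h.symm hnwc (fun hq => h3 hq.symm) hw_c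
        (fun hq => hxd hq.symm)
  by_cases hxd2 : G.Adj x L.d
  · exact noP7 C.p7 L.f L.e w u L.b L.c x L.ef.symm hwe.symm huw.symm hub L.bc hcx
      (fun hq => hnwf hq.symm) (fun hq => hnuf hq.symm) (fun hq => L.bf hq.symm)
      (fun hq => L.cf hq.symm) (fun hq => dist2 C (L.rot.rot.rot) hxd2 hq.symm hx_e)
      (fun hq => hnue hq.symm) (fun hq => L.be hq.symm) (fun hq => L.ce hq.symm)
      (fun hq => hnxe hq.symm) hnwb hnwc hnwx
      hnuc hnux (fun hq => dist2 C (L.rot) hq.symm hxd2 hx_c)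
  · by_cases hxf2 : G.Adj x L.f
    · exact noC7 C.c7 u L.a L.f x L.c L.d w hua L.fa.symm hxf2.symm hcx.symm L.cd hwd.symm huw
        hnuf hnux hnuc hnud (fun hq => hnxa hq.symm) L.ac L.ad (fun hq => hnwa hq.symm)
        (fun hq => L.cf hq.symm) (fun hq => L.df hq.symm) (fun hq => hnwf hq.symm)
        hxd2 (fun hq => hnwx hq.symm) (fun hq => hnwc hq.symm)
    · exact noP7 C.p7 u L.a L.f L.e L.d L.c x hua L.fa.symm L.ef.symm L.de.symm L.cd.symm hcx
        hnuf hnue hnud hnuc hnux L.ae L.ad L.ac (fun hq => hnxa hq.symm)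
        (fun hq => L.df hq.symm) (fun hq => L.cf hq.symm) (fun hq => hxf2 hq.symm)
        (fun hq => L.ce hq.symm) (fun hq => hnxe hq.symm) (fun hq => hxd2 hq.symm)

lemma noE (C : Ctx G) (L : C6L G) {u : V} (hua : G.Adj u L.a) (hub : G.Adj u L.b) : False := by
  have hu_b : u ≠ L.b := hub.ne
  have hu_c : u ≠ L.c := fun h => L.ac (by rw [h] at hua; exact hua.symm)
  have hu_d : u ≠ L.d := fun h => L.ad (by rw [h] at hua; exact hua.symm)
  have hu_f : u ≠ L.f := fun h => L.bf (by rw [h] at hub; exact hub.symm)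
  have hnuc : ¬ G.Adj u L.c := fun h => dist2 C L hua h hu_b
  have hnud : ¬ G.Adj u L.d := fun h => dist2 C L.rot hub h hu_c
  have hnue : ¬ G.Adj u L.e := fun h => dist2 C (L.rot.rot.rot.rot) h hua hu_f
  have hnuf : ¬ G.Adj u L.f := fun h => dist2 C (L.rot.rot.rot.rot.rot) h hub hua.ne
  by_cases hex : ∃ w, G.Adj u w ∧ w ≠ L.a ∧ ¬ G.Adj w L.a
  · obtain ⟨w, huw, hwna, hnwa⟩ := hex
    have hw_b : w ≠ L.b := fun h => hnwa (by rw [h]; exact L.ab.symm)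
    have hnwb : ¬ G.Adj w L.b := fun h =>
      F2 C.dia hub hua.symm L.ab huw.symm h (fun hq => hwna hq.symm) (fun hq => hnwa hq.symm)
    have hnwc : ¬ G.Adj w L.c := fun h =>
      noC4 C.c4 hub L.bc h.symm huw.symm hnuc (fun hq => hnwb hq.symm) hu_c
        (fun hq => hw_b hq.symm)
    have hnwf : ¬ G.Adj w L.f := fun h =>
      noC4 C.c4 hua L.fa.symm h.symm huw.symm hnuf (fun hq => hnwa hq.symm) hu_f
        (fun hq => hwna hq.symm)
    by_cases hwd : G.Adj w L.d
    · by_cases hwe : G.Adj w L.e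
      · exact noE_E3 C L hua hub huw hnuc hnud hnue hnuf hnwa hnwb hnwc hwd hwe hnwf
      · exact noE_S3 C L hua hub huw hnuc hnud hnue hnuf hnwa hnwb hnwc hwd hwe hnwf
    · by_cases hwe : G.Adj w L.e
      · exact noE_S3 C L.refl hub hua huw hnuf hnue hnud hnuc hnwb hnwa hnwf hwe hwd hnwc
      · exact noP7 C.p7 L.c L.d L.e L.f L.a u w L.cd L.de L.ef L.fa hua.symm huw
          L.ce L.cf (fun hq => L.ac hq.symm) (fun hq => hnuc hq.symm) (fun hq => hnwc hq.symm)
          L.df (fun hq => L.ad hq.symm) (fun hq => hnud hq.symm) (fun hq => hwd hq.symm)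
          (fun hq => L.ae hq.symm) (fun hq => hnue hq.symm) (fun hq => hwe hq.symm)
          (fun hq => hnuf hq.symm) (fun hq => hnwf hq.symm) (fun hq => hnwa hq.symm)
  · push_neg at hex
    refine C.ncut (cutset_gen C.conn (G.neighborSet u) {u} ?_ u L.d rfl ?_ ?_ ?_ ?_)
    · intro p hp q hq hne
      simp only [mem_neighborSet] at hp hq
      rcases eq_or_ne p L.a with rfl | hpa
      · rcases eq_or_ne q L.a with rfl | hqa
        · exact absurd rfl hne
        · exact (hex q hq hqa).symm
      · rcases eq_or_ne q L.a with rfl | hqa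
        · exact hex p hp hpa
        · have hpA := hex p hp hpa
          have hqA := hex q hq hqa
          have hpb : p = L.b ∨ G.Adj p L.b := by
            rcases eq_or_ne p L.b with rfl | hh
            · exact Or.inl rfl
            · right; by_contra hnb
              exact F2 C.dia hua hub.symm L.ab.symm hp.symm hpA (fun hq2 => hh hq2.symm)
                (fun hq2 => hnb hq2.symm)
          have hqb : q = L.b ∨ G.Adj q L.b := by
            rcases eq_or_ne q L.b with rfl | hh
            · exact Or.inl rfl
            · right; by_contra hnb
              exact F2 C.dia hua hub.symm L.ab.symm hq.symm hqA (fun hq2 => hh hq2.symm)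
                (fun hq2 => hnb hq2.symm)
          rcases hpb with rfl | hpb
          · rcases hqb with rfl | hqb
            · exact absurd rfl hne
            · exact hqb.symm
          · rcases hqb with rfl | hqb
            · exact hpb
            · by_contra hnpq
              exact F2 C.dia L.ab hpA hpb hqA hqb hne hnpq
    · exact fun h => hu_d (Set.mem_singleton_iff.mp h).symm
    · exact hnud
    · intro p hp hmem
      rw [Set.mem_singleton_iff] at hp
      subst hp
      exact G.irrefl hmem
    · intro p hp y hy
      rw [Set.mem_singleton_iff] at hp
      subst hp
      exact Or.inr hy

end Claim1

section Claim2
variable {V : Type*} [Fintype V] {G : SimpleGraph V}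

lemma noS_key (C : Ctx G) (L : C6L G) {s : V} (hsa : G.Adj s L.a)
    (hnsb : ¬ G.Adj s L.b) (hnsc : ¬ G.Adj s L.c) (hnsd : ¬ G.Adj s L.d)
    (hnse : ¬ G.Adj s L.e) (hnsf : ¬ G.Adj s L.f) :
    ∀ z, G.Adj s z → z ≠ L.a →
      (G.Adj z L.a ∨ (G.Adj z L.d ∧ ¬ G.Adj z L.a ∧ ¬ G.Adj z L.b ∧ ¬ G.Adj z L.c ∧
        ¬ G.Adj z L.e ∧ ¬ G.Adj z L.f)) := by
  intro z hsz hza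
  have hs_b : s ≠ L.b := fun h => hnsc (by rw [h]; exact L.bc)
  have hs_f : s ≠ L.f := fun h => hnse (by rw [h]; exact L.ef.symm)
  have hz_b : z ≠ L.b := fun h => hnsb (by rw [← h]; exact hsz)
  have hz_c : z ≠ L.c := fun h => hnsc (by rw [← h]; exact hsz)
  have hz_d : z ≠ L.d := fun h => hnsd (by rw [← h]; exact hsz)
  have hz_e : z ≠ L.e := fun h => hnse (by rw [← h]; exact hsz)
  have hz_f : z ≠ L.f := fun h => hnsf (by rw [← h]; exact hsz)
  by_cases h1 : G.Adj z L.a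
  · exact Or.inl h1
  have hnzb : ¬ G.Adj z L.b := fun h =>
    noC4 C.c4 hsa L.ab h.symm hsz.symm hnsb (fun hq => h1 hq.symm) hs_b (fun hq => hza hq.symm)
  have hnzf : ¬ G.Adj z L.f := fun h =>
    noC4 C.c4 hsa L.fa.symm h.symm hsz.symm hnsf (fun hq => h1 hq.symm) hs_f
      (fun hq => hza hq.symm)
  have hnzc : ¬ G.Adj z L.c := by
    intro h
    by_cases h2 : G.Adj z L.d
    · exact noE C (L.rot.rot) h h2
    · have hnze' : ¬ G.Adj z L.e := fun hq => dist2 C (L.rot.rot) h hq hz_d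
      exact noC7 C.c7 s L.a L.f L.e L.d L.c z hsa L.fa.symm L.ef.symm L.de.symm L.cd.symm
        h.symm hsz hnsf hnse hnsd hnsc L.ae L.ad L.ac (fun hq => h1 hq.symm)
        (fun hq => L.df hq.symm) (fun hq => L.cf hq.symm) (fun hq => hnzf hq.symm)
        (fun hq => L.ce hq.symm) (fun hq => hnze' hq.symm) (fun hq => h2 hq.symm)
  have hnze : ¬ G.Adj z L.e := by
    intro h
    by_cases h2 : G.Adj z L.d
    · exact noE C (L.rot.rot.rot) h2 h
    · exact noC7 C.c7 s L.a L.b L.c L.d L.e z hsa L.ab L.bc L.cd L.de h.symm hsz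
        hnsb hnsc hnsd hnse L.ac L.ad L.ae (fun hq => h1 hq.symm) L.bd L.be
        (fun hq => hnzb hq.symm) L.ce (fun hq => hnzc hq.symm) (fun hq => h2 hq.symm)
  by_cases h2 : G.Adj z L.d
  · exact Or.inr ⟨h2, h1, hnzb, hnzc, hnze, hnzf⟩
  · exact (noP7 C.p7 L.c L.d L.e L.f L.a s z L.cd L.de L.ef L.fa hsa.symm hsz
      L.ce L.cf (fun hq => L.ac hq.symm) (fun hq => hnsc hq.symm) (fun hq => hnzc hq.symm)
      L.df (fun hq => L.ad hq.symm) (fun hq => hnsd hq.symm) (fun hq => h2 hq.symm)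
      (fun hq => L.ae hq.symm) (fun hq => hnse hq.symm) (fun hq => hnze hq.symm)
      (fun hq => hnsf hq.symm) (fun hq => hnzf hq.symm) (fun hq => h1 hq.symm)).elim

lemma noS (C : Ctx G) (L : C6L G) {s : V} (hsa : G.Adj s L.a)
    (hnsb : ¬ G.Adj s L.b) (hnsc : ¬ G.Adj s L.c) (hnsd : ¬ G.Adj s L.d)
    (hnse : ¬ G.Adj s L.e) (hnsf : ¬ G.Adj s L.f) : False := by
  have hs_d : s ≠ L.d := fun h => hnsc (by rw [h]; exact L.cd.symm)
  by_cases hex : ∃ z, G.Adj s z ∧ z ≠ L.a ∧ ¬ G.Adj z L.a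
  · obtain ⟨z, hsz, hza, hnza⟩ := hex
    rcases noS_key C L hsa hnsb hnsc hnsd hnse hnsf z hsz hza with h1 |
      ⟨hzd, _, hnzb, hnzc, hnze, hnzf⟩
    · exact hnza h1
    obtain ⟨x, hbx, hxa, hxc⟩ := third_nbr (C.deg L.b) L.a L.c
    have hx_d : x ≠ L.d := fun h => L.bd (by rw [h] at hbx; exact hbx)
    have hx_e : x ≠ L.e := fun h => L.be (by rw [h] at hbx; exact hbx)
    have hnxs : ¬ G.Adj s x := by
      intro h
      rcases noS_key C L hsa hnsb hnsc hnsd hnse hnsf x h hxa with h2 | pack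
      · exact noE C L h2 hbx.symm
      · exact pack.2.2.1 hbx.symm
    have hnxz : ¬ G.Adj x z := by
      intro h
      rcases noS_key C (L.rot.rot.rot) hzd hnze hnzf hnza hnzb hnzc x h.symm hx_d with h2 | pack
      · exact dist2 C (L.rot) hbx.symm h2 hxc
      · exact pack.2.2.2.2.1 hbx.symm
    have hnxa : ¬ G.Adj x L.a := fun h => noE C L h hbx.symm
    have hnxd : ¬ G.Adj x L.d := fun h => dist2 C (L.rot) hbx.symm h hxc
    by_cases hxe : G.Adj x L.e
    · exact noC7 C.c7 s L.a L.b x L.e L.d z hsa L.ab hbx hxe L.de.symm hzd.symm hsz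
        hnsb hnxs hnse hnsd (fun hq => hnxa hq.symm) L.ae L.ad (fun hq => hnza hq.symm)
        L.be L.bd (fun hq => hnzb hq.symm) hnxd hnxz (fun hq => hnze hq.symm)
    · exact noP7 C.p7 L.e L.d z s L.a L.b x L.de.symm hzd.symm hsz.symm hsa L.ab hbx
        (fun hq => hnze hq.symm) (fun hq => hnse hq.symm) (fun hq => L.ae hq.symm)
        (fun hq => L.be hq.symm) (fun hq => hxe hq.symm) (fun hq => hnsd hq.symm)
        (fun hq => L.ad hq.symm) (fun hq => L.bd hq.symm) (fun hq => hnxd hq.symm)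
        hnza hnzb (fun hq => hnxz hq.symm) hnsb hnxs (fun hq => hnxa hq.symm)
  · push_neg at hex
    refine C.ncut (cutset_gen C.conn (G.neighborSet s) {s} ?_ s L.d rfl ?_ ?_ ?_ ?_)
    · intro p hp q hq hne
      simp only [mem_neighborSet] at hp hq
      rcases eq_or_ne p L.a with rfl | hpa
      · rcases eq_or_ne q L.a with rfl | hqa
        · exact absurd rfl hne
        · exact (hex q hq hqa).symm
      · rcases eq_or_ne q L.a with rfl | hqa
        · exact hex p hp hpa
        · have hpA := hex p hp hpa
          have hqA := hex q hq hqa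
          by_contra hnpq
          exact F2 C.dia hsa hp.symm hpA hq.symm hqA hne hnpq
    · exact fun h => hs_d (Set.mem_singleton_iff.mp h).symm
    · exact hnsd
    · intro p hp hmem
      rw [Set.mem_singleton_iff] at hp; subst hp
      exact G.irrefl hmem
    · intro p hp y hy
      rw [Set.mem_singleton_iff] at hp; subst hp
      exact Or.inr hy

end Claim2

section Spokes
variable {V : Type*} [Fintype V] {G : SimpleGraph V}

lemma uniqT (C : Ctx G) (L : C6L G) {t t' : V} (h1 : G.Adj t L.a) (h2 : G.Adj t L.d)
    (h1' : G.Adj t' L.a) (h2' : G.Adj t' L.d) : t = t' := by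
  by_contra hne
  exact F1 C.c4 C.dia L.ad (fun h => L.ae (by rw [h]; exact L.de)) h1 h2 h1' h2' hne

lemma exT (C : Ctx G) (L : C6L G) :
    ∃ t, G.Adj t L.a ∧ G.Adj t L.d ∧ ¬ G.Adj t L.b ∧ ¬ G.Adj t L.c ∧ ¬ G.Adj t L.e ∧
      ¬ G.Adj t L.f := by
  obtain ⟨q, haq, hqb, hqf⟩ := third_nbr (C.deg L.a) L.b L.f
  have hqa := haq.symm
  have hnqb : ¬ G.Adj q L.b := fun h => noE C L hqa h
  have hnqf : ¬ G.Adj q L.f := fun h => noE C (L.rot.rot.rot.rot.rot) h hqa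
  have hnqc : ¬ G.Adj q L.c := fun h => dist2 C L hqa h hqb
  have hnqe : ¬ G.Adj q L.e := fun h => dist2 C (L.rot.rot.rot.rot) h hqa hqf
  by_cases hqd : G.Adj q L.d
  · exact ⟨q, hqa, hqd, hnqb, hnqc, hnqe, hnqf⟩
  · exact (noS C L hqa hnqb hnqc hqd hnqe hnqf).elim

lemma attach (C : Ctx G) (L : C6L G) {t : V} (hta : G.Adj t L.a) (htd : G.Adj t L.d) :
    ∀ y, G.Adj y L.a → y = L.b ∨ y = L.f ∨ y = t := by
  intro y hy
  by_cases h1 : y = L.b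
  · exact Or.inl h1
  by_cases h2 : y = L.f
  · exact Or.inr (Or.inl h2)
  have hnyb : ¬ G.Adj y L.b := fun h => noE C L hy h
  have hnyf : ¬ G.Adj y L.f := fun h => noE C (L.rot.rot.rot.rot.rot) h hy
  have hnyc : ¬ G.Adj y L.c := fun h => dist2 C L hy h h1
  have hnye : ¬ G.Adj y L.e := fun h => dist2 C (L.rot.rot.rot.rot) h hy h2
  by_cases hyd : G.Adj y L.d
  · exact Or.inr (Or.inr (uniqT C L hy hyd hta htd))
  · exact (noS C L hy hnyb hnyc hyd hnye hnyf).elim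

lemma La (C : Ctx G) (L : C6L G) {t0 t1 t2 z : V}
    (ht1b : G.Adj t1 L.b) (ht2c : G.Adj t2 L.c) (ht2f : G.Adj t2 L.f)
    (ht0nb : ¬ G.Adj t0 L.b) (ht0nc : ¬ G.Adj t0 L.c) (ht0nf : ¬ G.Adj t0 L.f)
    (ht1nc : ¬ G.Adj t1 L.c) (ht1nf : ¬ G.Adj t1 L.f) (ht2nb : ¬ G.Adj t2 L.b)
    (hnt01 : ¬ G.Adj t0 t1) (hnt02 : ¬ G.Adj t0 t2) (hnt12 : ¬ G.Adj t1 t2)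
    (hzb : ¬ G.Adj z L.b) (hzc : ¬ G.Adj z L.c) (hzf : ¬ G.Adj z L.f)
    (h0 : G.Adj z t0) (h1 : G.Adj z t1) (hn2 : ¬ G.Adj z t2) : False :=
  noP7 C.p7 t0 z t1 L.b L.c t2 L.f h0.symm h1 ht1b L.bc ht2c.symm ht2f
    hnt01 ht0nb ht0nc hnt02 ht0nf hzb hzc hn2 hzf ht1nc hnt12 ht1nf
    (fun hq => ht2nb hq.symm) L.bf L.cf

lemma hub (C : Ctx G) (L : C6L G) {t0 t1 t2 z : V}
    (ht0a : G.Adj t0 L.a) (ht0d : G.Adj t0 L.d)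
    (ht0nb : ¬ G.Adj t0 L.b) (ht0nc : ¬ G.Adj t0 L.c) (ht0ne : ¬ G.Adj t0 L.e)
    (ht0nf : ¬ G.Adj t0 L.f)
    (ht1b : G.Adj t1 L.b) (ht1e : G.Adj t1 L.e)
    (ht1nc : ¬ G.Adj t1 L.c) (ht1nd : ¬ G.Adj t1 L.d) (ht1nf : ¬ G.Adj t1 L.f)
    (ht1na : ¬ G.Adj t1 L.a)
    (ht2c : G.Adj t2 L.c) (ht2f : G.Adj t2 L.f)
    (ht2nd : ¬ G.Adj t2 L.d) (ht2ne : ¬ G.Adj t2 L.e) (ht2na : ¬ G.Adj t2 L.a)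
    (ht2nb : ¬ G.Adj t2 L.b)
    (hnt01 : ¬ G.Adj t0 t1) (hnt02 : ¬ G.Adj t0 t2) (hnt12 : ¬ G.Adj t1 t2)
    (hza : ¬ G.Adj z L.a) (hzb : ¬ G.Adj z L.b) (hzc : ¬ G.Adj z L.c)
    (hzd : ¬ G.Adj z L.d) (hze : ¬ G.Adj z L.e) (hzf : ¬ G.Adj z L.f)
    (h0 : G.Adj z t0) : G.Adj z t1 ∧ G.Adj z t2 := by
  by_cases h1 : G.Adj z t1
  · by_cases h2 : G.Adj z t2
    · exact ⟨h1, h2⟩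
    · exact (La C L ht1b ht2c ht2f ht0nb ht0nc ht0nf ht1nc ht1nf ht2nb hnt01 hnt02 hnt12
        hzb hzc hzf h0 h1 h2).elim
  · by_cases h2 : G.Adj z t2
    · exact (La C (L.rot.rot) ht0d ht1e ht1b ht2nd ht2ne ht2nb ht0ne ht0nb ht1nd
        (fun hq => hnt02 hq.symm) (fun hq => hnt12 hq.symm) hnt01 hzd hze hzb h2 h0 h1).elim
    · exfalso
      have hkey : ∀ y, G.Adj z y → y = t0 ∨ G.Adj y t0 := by
        intro y hzy
        rcases eq_or_ne y t0 with rfl | hy0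
        · exact Or.inl rfl
        right; by_contra hny0
        have hya : ¬ G.Adj y L.a := by
          intro h
          rcases attach C L ht0a ht0d y h with rfl | rfl | rfl
          · exact hzb hzy
          · exact hzf hzy
          · exact hy0 rfl
        have hyb : ¬ G.Adj y L.b := by
          intro h
          rcases attach C (L.rot) ht1b ht1e y h with rfl | rfl | rfl
          · exact hzc hzy
          · exact hza hzy
          · exact h1 hzy
        have hyc : ¬ G.Adj y L.c := by
          intro h
          rcases attach C (L.rot.rot) ht2c ht2f y h with rfl | rfl | rfl
          · exact hzd hzy
          · exact hzb hzy
          · exact h2 hzy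
        have hyd : ¬ G.Adj y L.d := by
          intro h
          rcases attach C (L.rot.rot.rot) ht0d ht0a y h with rfl | rfl | rfl
          · exact hze hzy
          · exact hzc hzy
          · exact hy0 rfl
        have hye : ¬ G.Adj y L.e := by
          intro h
          rcases attach C (L.rot.rot.rot.rot) ht1e ht1b y h with rfl | rfl | rfl
          · exact hzf hzy
          · exact hzd hzy
          · exact h1 hzy
        have hyf : ¬ G.Adj y L.f := by
          intro h
          rcases attach C (L.rot.rot.rot.rot.rot) ht2f ht2c y h with rfl | rfl | rfl
          · exact hza hzy
          · exact hze hzy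
          · exact h2 hzy
        by_cases hyt1 : G.Adj y t1
        · by_cases hyt2 : G.Adj y t2
          · exact noP7 C.p7 t1 y t2 L.c L.d t0 L.a hyt1.symm hyt2 ht2c L.cd ht0d.symm ht0a
              hnt12 ht1nc ht1nd (fun hq => hnt01 hq.symm) ht1na hyc hyd hny0 hya
              ht2nd (fun hq => hnt02 hq.symm) ht2na (fun hq => ht0nc hq.symm)
              (fun hq => L.ac hq.symm) (fun hq => L.ad hq.symm)
          · exact noP7 C.p7 t0 z y t1 L.b L.c t2 h0.symm hzy hyt1 ht1b L.bc ht2c.symm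
              (fun hq => hny0 hq.symm) hnt01 ht0nb ht0nc hnt02 h1 hzb hzc h2
              hyb hyc hyt2 ht1nc hnt12 (fun hq => ht2nb hq.symm)
        · by_cases hyt2 : G.Adj y t2
          · exact noP7 C.p7 t0 z y t2 L.c L.b t1 h0.symm hzy hyt2 ht2c L.bc.symm ht1b.symm
              (fun hq => hny0 hq.symm) hnt02 ht0nc ht0nb hnt01 h2 hzc hzb h1
              hyc hyb hyt1 ht2nb (fun hq => hnt12 hq.symm) (fun hq => ht1nc hq.symm)
          · exact noP7 C.p7 t1 L.b L.c L.d t0 z y ht1b L.bc L.cd ht0d.symm h0.symm hzy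
              ht1nc ht1nd (fun hq => hnt01 hq.symm) (fun hq => h1 hq.symm)
              (fun hq => hyt1 hq.symm) L.bd (fun hq => ht0nb hq.symm)
              (fun hq => hzb hq.symm) (fun hq => hyb hq.symm) (fun hq => ht0nc hq.symm)
              (fun hq => hzc hq.symm) (fun hq => hyc hq.symm) (fun hq => hzd hq.symm)
              (fun hq => hyd hq.symm) (fun hq => hny0 hq.symm)
      have hclq : G.IsClique (G.neighborSet z) := by
        intro p hp q hq hne
        simp only [mem_neighborSet] at hp hq
        rcases hkey p hp with rfl | hp0
        · rcases hkey q hq with rfl | hq0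
          · exact absurd rfl hne
          · exact hq0.symm
        · rcases hkey q hq with rfl | hq0
          · exact hp0
          · by_contra hnpq
            exact F2 C.dia h0 hp.symm hp0 hq.symm hq0 hne hnpq
      have hz_a : z ≠ L.a := fun h => hzb (by rw [h]; exact L.ab)
      refine C.ncut (cutset_gen C.conn (G.neighborSet z) {z} hclq z L.a rfl ?_ ?_ ?_ ?_)
      · exact fun h => hz_a (Set.mem_singleton_iff.mp h).symm
      · exact hza
      · intro p hp hmem
        rw [Set.mem_singleton_iff] at hp; subst hp
        exact G.irrefl hmem
      · intro p hp y hy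
        rw [Set.mem_singleton_iff] at hp; subst hp
        exact Or.inr hy

end Spokes

section Endgame
variable {V : Type*} [Fintype V] {G : SimpleGraph V}

set_option maxHeartbeats 2000000 in
lemma petersen_case (C : Ctx G) (L : C6L G) : Nonempty (G ≃g petersenGraph) := by
  obtain ⟨t0, ht0a, ht0d, ht0nb, ht0nc, ht0ne, ht0nf⟩ := exT C L
  obtain ⟨t1, ht1b, ht1e, ht1nc, ht1nd, ht1nf, ht1na⟩ := exT C (L.rot)
  obtain ⟨t2, ht2c, ht2f, ht2nd, ht2ne, ht2na, ht2nb⟩ := exT C (L.rot.rot)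
  have hT0b : t0 ≠ L.b := fun h => L.bd (by rw [← h]; exact ht0d)
  have hT0f : t0 ≠ L.f := fun h => L.df (by rw [← h]; exact ht0d.symm)
  have hT1a : t1 ≠ L.a := fun h => L.ae (by rw [← h]; exact ht1e)
  have hT1c : t1 ≠ L.c := fun h => L.ce (by rw [← h]; exact ht1e)
  have hT2a : t2 ≠ L.a := fun h => L.ac (by rw [← h]; exact ht2c)
  have hT2b : t2 ≠ L.b := fun h => L.bf (by rw [← h]; exact ht2f)
  have hnt01 : ¬ G.Adj t0 t1 := fun h =>
    noC4 C.c4 h ht1b L.ab.symm ht0a.symm ht0nb ht1na hT0b hT1a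
  have hnt02 : ¬ G.Adj t0 t2 := fun h =>
    noC4 C.c4 h ht2f L.fa ht0a.symm ht0nf ht2na hT0f hT2a
  have hnt12 : ¬ G.Adj t1 t2 := fun h =>
    noC4 C.c4 h ht2c L.bc.symm ht1b.symm ht1nc ht2nb hT1c hT2b
  have nT01 : t0 ≠ t1 := fun h => ht0nb (by rw [h]; exact ht1b)
  obtain ⟨hh, ht0h, hh_a, hh_d⟩ := third_nbr (C.deg t0) L.a L.d
  have hHa : ¬ G.Adj hh L.a := by
    intro h
    rcases attach C L ht0a ht0d hh h with rfl | rfl | rfl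
    · exact ht0nb ht0h
    · exact ht0nf ht0h
    · exact G.irrefl ht0h
  have hHb : ¬ G.Adj hh L.b := by
    intro h
    rcases attach C (L.rot) ht1b ht1e hh h with rfl | rfl | rfl
    · exact ht0nc ht0h
    · exact hh_a rfl
    · exact hnt01 ht0h
  have hHc : ¬ G.Adj hh L.c := by
    intro h
    rcases attach C (L.rot.rot) ht2c ht2f hh h with rfl | rfl | rfl
    · exact hh_d rfl
    · exact ht0nb ht0h
    · exact hnt02 ht0h
  have hHd : ¬ G.Adj hh L.d := by
    intro h
    rcases attach C (L.rot.rot.rot) ht0d ht0a hh h with rfl | rfl | rfl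
    · exact ht0ne ht0h
    · exact ht0nc ht0h
    · exact G.irrefl ht0h
  have hHe : ¬ G.Adj hh L.e := by
    intro h
    rcases attach C (L.rot.rot.rot.rot) ht1e ht1b hh h with rfl | rfl | rfl
    · exact ht0nf ht0h
    · exact hh_d rfl
    · exact hnt01 ht0h
  have hHf : ¬ G.Adj hh L.f := by
    intro h
    rcases attach C (L.rot.rot.rot.rot.rot) ht2f ht2c hh h with rfl | rfl | rfl
    · exact hh_a rfl
    · exact ht0ne ht0h
    · exact hnt02 ht0h
  obtain ⟨hht1, hht2⟩ := hub C L ht0a ht0d ht0nb ht0nc ht0ne ht0nf ht1b ht1e ht1nc ht1nd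
    ht1nf ht1na ht2c ht2f ht2nd ht2ne ht2na ht2nb hnt01 hnt02 hnt12
    hHa hHb hHc hHd hHe hHf ht0h.symm
  have huniq : ∀ z, ¬G.Adj z L.a → ¬G.Adj z L.b → ¬G.Adj z L.c → ¬G.Adj z L.d →
      ¬G.Adj z L.e → ¬G.Adj z L.f → G.Adj z t0 → z = hh := by
    intro z hza hzb hzc hzd hze hzf h0
    obtain ⟨hz1, _⟩ := hub C L ht0a ht0d ht0nb ht0nc ht0ne ht0nf ht1b ht1e ht1nc ht1nd
      ht1nf ht1na ht2c ht2f ht2nd ht2ne ht2na ht2nb hnt01 hnt02 hnt12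
      hza hzb hzc hzd hze hzf h0
    by_contra hne
    by_cases hzh : G.Adj z hh
    · exact noDiamond C.dia hzh h0 hz1 ht0h.symm hht1 hnt01 nT01
    · exact F1 C.c4 C.dia hnt01 nT01 h0 hz1 ht0h.symm hht1 hne
  have huniq1 : ∀ z, ¬G.Adj z L.a → ¬G.Adj z L.b → ¬G.Adj z L.c → ¬G.Adj z L.d →
      ¬G.Adj z L.e → ¬G.Adj z L.f → G.Adj z t1 → z = hh := by
    intro z hza hzb hzc hzd hze hzf h1
    obtain ⟨_, hz0⟩ := hub C (L.rot) ht1b ht1e ht1nc ht1nd ht1nf ht1na ht2c ht2f ht2nd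
      ht2ne ht2na ht2nb ht0d ht0a ht0ne ht0nf ht0nb ht0nc
      hnt12 (fun hq => hnt01 hq.symm) (fun hq => hnt02 hq.symm)
      hzb hzc hzd hze hzf hza h1
    exact huniq z hza hzb hzc hzd hze hzf hz0
  have huniq2 : ∀ z, ¬G.Adj z L.a → ¬G.Adj z L.b → ¬G.Adj z L.c → ¬G.Adj z L.d →
      ¬G.Adj z L.e → ¬G.Adj z L.f → G.Adj z t2 → z = hh := by
    intro z hza hzb hzc hzd hze hzf h2
    obtain ⟨hz0, _⟩ := hub C (L.rot.rot) ht2c ht2f ht2nd ht2ne ht2na ht2nb ht0d ht0a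
      ht0ne ht0nf ht0nb ht0nc ht1e ht1b ht1nf ht1na ht1nc ht1nd
      (fun hq => hnt02 hq.symm) (fun hq => hnt12 hq.symm) hnt01
      hzc hzd hze hzf hza hzb h2
    exact huniq z hza hzb hzc hzd hze hzf hz0

  -- closure facts for Z*-vertices adjacent to the hub: no further vertices (W-cloud empty)
  have hHcl : ∀ y, G.Adj hh y → y = t0 ∨ y = t1 ∨ y = t2 := by
    intro y hy
    by_cases e0 : y = t0
    · exact Or.inl e0
    by_cases e1 : y = t1
    · exact Or.inr (Or.inl e1)
    by_cases e2 : y = t2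
    · exact Or.inr (Or.inr e2)
    exfalso
    have hya : ¬ G.Adj y L.a := by
      intro h
      rcases attach C L ht0a ht0d y h with rfl | rfl | rfl
      · exact hHb hy
      · exact hHf hy
      · exact e0 rfl
    have hyb : ¬ G.Adj y L.b := by
      intro h
      rcases attach C (L.rot) ht1b ht1e y h with rfl | rfl | rfl
      · exact hHc hy
      · exact hHa hy
      · exact e1 rfl
    have hyc : ¬ G.Adj y L.c := by
      intro h
      rcases attach C (L.rot.rot) ht2c ht2f y h with rfl | rfl | rfl
      · exact hHd hy
      · exact hHb hy
      · exact e2 rfl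
    have hyd : ¬ G.Adj y L.d := by
      intro h
      rcases attach C (L.rot.rot.rot) ht0d ht0a y h with rfl | rfl | rfl
      · exact hHe hy
      · exact hHc hy
      · exact e0 rfl
    have hye : ¬ G.Adj y L.e := by
      intro h
      rcases attach C (L.rot.rot.rot.rot) ht1e ht1b y h with rfl | rfl | rfl
      · exact hHf hy
      · exact hHd hy
      · exact e1 rfl
    have hyf : ¬ G.Adj y L.f := by
      intro h
      rcases attach C (L.rot.rot.rot.rot.rot) ht2f ht2c y h with rfl | rfl | rfl
      · exact hHa hy
      · exact hHe hy
      · exact e2 rfl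
    have hy_h : y ≠ hh := fun h => G.irrefl (by rw [h] at hy; exact hy)
    -- the W-cloud: Z*-vertices other than the hub; clique cutset {hh}
    have hScl : ∀ x, (¬G.Adj x L.a ∧ ¬G.Adj x L.b ∧ ¬G.Adj x L.c ∧ ¬G.Adj x L.d ∧
        ¬G.Adj x L.e ∧ ¬G.Adj x L.f) ∧ x ≠ hh → ∀ y', G.Adj x y' →
        ((¬G.Adj y' L.a ∧ ¬G.Adj y' L.b ∧ ¬G.Adj y' L.c ∧ ¬G.Adj y' L.d ∧
        ¬G.Adj y' L.e ∧ ¬G.Adj y' L.f) ∧ y' ≠ hh) ∨ y' = hh := by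
      rintro x ⟨⟨hxa, hxb, hxc, hxd, hxe, hxf⟩, hxh⟩ y' hxy
      by_cases hyh : y' = hh
      · exact Or.inr hyh
      left
      have hxt0 : ¬ G.Adj x t0 := fun h => hxh (huniq x hxa hxb hxc hxd hxe hxf h)
      have hxt1 : ¬ G.Adj x t1 := fun h => hxh (huniq1 x hxa hxb hxc hxd hxe hxf h)
      have hxt2 : ¬ G.Adj x t2 := fun h => hxh (huniq2 x hxa hxb hxc hxd hxe hxf h)
      refine ⟨⟨?_, ?_, ?_, ?_, ?_, ?_⟩, hyh⟩
      · intro h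
        rcases attach C L ht0a ht0d y' h with rfl | rfl | rfl
        · exact hxb hxy
        · exact hxf hxy
        · exact hxt0 hxy
      · intro h
        rcases attach C (L.rot) ht1b ht1e y' h with rfl | rfl | rfl
        · exact hxc hxy
        · exact hxa hxy
        · exact hxt1 hxy
      · intro h
        rcases attach C (L.rot.rot) ht2c ht2f y' h with rfl | rfl | rfl
        · exact hxd hxy
        · exact hxb hxy
        · exact hxt2 hxy
      · intro h
        rcases attach C (L.rot.rot.rot) ht0d ht0a y' h with rfl | rfl | rfl
        · exact hxe hxy
        · exact hxc hxy
        · exact hxt0 hxy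
      · intro h
        rcases attach C (L.rot.rot.rot.rot) ht1e ht1b y' h with rfl | rfl | rfl
        · exact hxf hxy
        · exact hxd hxy
        · exact hxt1 hxy
      · intro h
        rcases attach C (L.rot.rot.rot.rot.rot) ht2f ht2c y' h with rfl | rfl | rfl
        · exact hxa hxy
        · exact hxe hxy
        · exact hxt2 hxy
    refine C.ncut (cutset_gen C.conn {hh}
      {v | (¬G.Adj v L.a ∧ ¬G.Adj v L.b ∧ ¬G.Adj v L.c ∧ ¬G.Adj v L.d ∧
        ¬G.Adj v L.e ∧ ¬G.Adj v L.f) ∧ v ≠ hh}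
      ?_ y L.a ⟨⟨hya, hyb, hyc, hyd, hye, hyf⟩, hy_h⟩ ?_ ?_ ?_ ?_)
    · intro p hp q hq hne
      exact absurd ((Set.mem_singleton_iff.mp hp).trans (Set.mem_singleton_iff.mp hq).symm) hne
    · rintro ⟨⟨_, h2, _, _, _, _⟩, _⟩
      exact h2 L.ab
    · exact fun h => hHb (by rw [← Set.mem_singleton_iff.mp h]; exact L.ab)
    · rintro x ⟨_, hxh⟩ hx
      exact hxh (Set.mem_singleton_iff.mp hx)
    · intro x hx y' hxy
      rcases hScl x hx y' hxy with h1 | h2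
      · exact Or.inl h1
      · exact Or.inr (by rw [h2]; rfl)
  -- every vertex is one of the ten
  have hU : ∀ x : V, x = L.a ∨ x = L.b ∨ x = L.c ∨ x = L.d ∨ x = L.e ∨ x = L.f ∨
      x = t0 ∨ x = t1 ∨ x = t2 ∨ x = hh := by
    have hCv : ∀ y, G.Adj L.a y → (y = L.b ∨ y = L.f ∨ y = t0) :=
      fun y hy => attach C L ht0a ht0d y hy.symm
    have hT0cl : ∀ y, G.Adj t0 y → y = L.a ∨ y = L.d ∨ y = hh := by
      intro y hy
      by_cases h1 : y = L.a
      · exact Or.inl h1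
      by_cases h4 : y = L.d
      · exact Or.inr (Or.inl h4)
      right; right
      have hya : ¬ G.Adj y L.a := by
        intro h
        rcases attach C L ht0a ht0d y h with rfl | rfl | rfl
        · exact ht0nb hy
        · exact ht0nf hy
        · exact G.irrefl hy
      have hyb : ¬ G.Adj y L.b := by
        intro h
        rcases attach C (L.rot) ht1b ht1e y h with rfl | rfl | rfl
        · exact ht0nc hy
        · exact h1 rfl
        · exact hnt01 hy
      have hyc : ¬ G.Adj y L.c := by
        intro h
        rcases attach C (L.rot.rot) ht2c ht2f y h with rfl | rfl | rfl
        · exact h4 rfl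
        · exact ht0nb hy
        · exact hnt02 hy
      have hyd : ¬ G.Adj y L.d := by
        intro h
        rcases attach C (L.rot.rot.rot) ht0d ht0a y h with rfl | rfl | rfl
        · exact ht0ne hy
        · exact ht0nc hy
        · exact G.irrefl hy
      have hye : ¬ G.Adj y L.e := by
        intro h
        rcases attach C (L.rot.rot.rot.rot) ht1e ht1b y h with rfl | rfl | rfl
        · exact ht0nf hy
        · exact h4 rfl
        · exact hnt01 hy
      have hyf : ¬ G.Adj y L.f := by
        intro h
        rcases attach C (L.rot.rot.rot.rot.rot) ht2f ht2c y h with rfl | rfl | rfl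
        · exact h1 rfl
        · exact ht0ne hy
        · exact hnt02 hy
      exact huniq y hya hyb hyc hyd hye hyf hy.symm
    have hT1cl : ∀ y, G.Adj t1 y → y = L.b ∨ y = L.e ∨ y = hh := by
      intro y hy
      by_cases h1 : y = L.b
      · exact Or.inl h1
      by_cases h4 : y = L.e
      · exact Or.inr (Or.inl h4)
      right; right
      have hya : ¬ G.Adj y L.a := by
        intro h
        rcases attach C L ht0a ht0d y h with rfl | rfl | rfl
        · exact h1 rfl
        · exact ht1nf hy
        · exact (fun hq => hnt01 hq.symm) hy
      have hyb : ¬ G.Adj y L.b := by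
        intro h
        rcases attach C (L.rot) ht1b ht1e y h with rfl | rfl | rfl
        · exact ht1nc hy
        · exact ht1na hy
        · exact G.irrefl hy
      have hyc : ¬ G.Adj y L.c := by
        intro h
        rcases attach C (L.rot.rot) ht2c ht2f y h with rfl | rfl | rfl
        · exact ht1nd hy
        · exact h1 rfl
        · exact hnt12 hy
      have hyd : ¬ G.Adj y L.d := by
        intro h
        rcases attach C (L.rot.rot.rot) ht0d ht0a y h with rfl | rfl | rfl
        · exact h4 rfl
        · exact ht1nc hy
        · exact (fun hq => hnt01 hq.symm) hy
      have hye : ¬ G.Adj y L.e := by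
        intro h
        rcases attach C (L.rot.rot.rot.rot) ht1e ht1b y h with rfl | rfl | rfl
        · exact ht1nf hy
        · exact ht1nd hy
        · exact G.irrefl hy
      have hyf : ¬ G.Adj y L.f := by
        intro h
        rcases attach C (L.rot.rot.rot.rot.rot) ht2f ht2c y h with rfl | rfl | rfl
        · exact ht1na hy
        · exact h4 rfl
        · exact hnt12 hy
      exact huniq1 y hya hyb hyc hyd hye hyf hy.symm
    have hT2cl : ∀ y, G.Adj t2 y → y = L.c ∨ y = L.f ∨ y = hh := by
      intro y hy
      by_cases h1 : y = L.c
      · exact Or.inl h1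
      by_cases h4 : y = L.f
      · exact Or.inr (Or.inl h4)
      right; right
      have hya : ¬ G.Adj y L.a := by
        intro h
        rcases attach C L ht0a ht0d y h with rfl | rfl | rfl
        · exact ht2nb hy
        · exact h4 rfl
        · exact (fun hq => hnt02 hq.symm) hy
      have hyb : ¬ G.Adj y L.b := by
        intro h
        rcases attach C (L.rot) ht1b ht1e y h with rfl | rfl | rfl
        · exact h1 rfl
        · exact ht2na hy
        · exact (fun hq => hnt12 hq.symm) hy
      have hyc : ¬ G.Adj y L.c := by
        intro h
        rcases attach C (L.rot.rot) ht2c ht2f y h with rfl | rfl | rfl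
        · exact ht2nd hy
        · exact ht2nb hy
        · exact G.irrefl hy
      have hyd : ¬ G.Adj y L.d := by
        intro h
        rcases attach C (L.rot.rot.rot) ht0d ht0a y h with rfl | rfl | rfl
        · exact ht2ne hy
        · exact h1 rfl
        · exact (fun hq => hnt02 hq.symm) hy
      have hye : ¬ G.Adj y L.e := by
        intro h
        rcases attach C (L.rot.rot.rot.rot) ht1e ht1b y h with rfl | rfl | rfl
        · exact h4 rfl
        · exact ht2nd hy
        · exact (fun hq => hnt12 hq.symm) hy
      have hyf : ¬ G.Adj y L.f := by
        intro h
        rcases attach C (L.rot.rot.rot.rot.rot) ht2f ht2c y h with rfl | rfl | rfl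
        · exact ht2na hy
        · exact ht2ne hy
        · exact G.irrefl hy
      exact huniq2 y hya hyb hyc hyd hye hyf hy.symm
    have hstep : ∀ x, (x = L.a ∨ x = L.b ∨ x = L.c ∨ x = L.d ∨ x = L.e ∨ x = L.f ∨
        x = t0 ∨ x = t1 ∨ x = t2 ∨ x = hh) → ∀ y, G.Adj x y →
        (y = L.a ∨ y = L.b ∨ y = L.c ∨ y = L.d ∨ y = L.e ∨ y = L.f ∨
        y = t0 ∨ y = t1 ∨ y = t2 ∨ y = hh) := by
      intro x hx y hy
      rcases hx with rfl | rfl | rfl | rfl | rfl | rfl | rfl | rfl | rfl | rfl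
      · rcases hCv y hy with rfl | rfl | rfl
        · tauto
        · tauto
        · tauto
      · rcases attach C (L.rot) ht1b ht1e y hy.symm with rfl | rfl | rfl <;> tauto
      · rcases attach C (L.rot.rot) ht2c ht2f y hy.symm with rfl | rfl | rfl <;> tauto
      · rcases attach C (L.rot.rot.rot) ht0d ht0a y hy.symm with rfl | rfl | rfl <;> tauto
      · rcases attach C (L.rot.rot.rot.rot) ht1e ht1b y hy.symm with rfl | rfl | rfl <;> tauto
      · rcases attach C (L.rot.rot.rot.rot.rot) ht2f ht2c y hy.symm with rfl | rfl | rfl <;> tauto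
      · rcases hT0cl y hy with rfl | rfl | rfl <;> tauto
      · rcases hT1cl y hy with rfl | rfl | rfl <;> tauto
      · rcases hT2cl y hy with rfl | rfl | rfl <;> tauto
      · rcases hHcl y hy with rfl | rfl | rfl <;> tauto
    have hwalk : ∀ (p q : V), G.Walk p q → (p = L.a ∨ p = L.b ∨ p = L.c ∨ p = L.d ∨
        p = L.e ∨ p = L.f ∨ p = t0 ∨ p = t1 ∨ p = t2 ∨ p = hh) →
        (q = L.a ∨ q = L.b ∨ q = L.c ∨ q = L.d ∨ q = L.e ∨ q = L.f ∨
        q = t0 ∨ q = t1 ∨ q = t2 ∨ q = hh) := by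
      intro p q wk
      induction wk with
      | nil => exact id
      | cons h _ ih => exact fun hp => ih (hstep _ hp _ h)
    intro x
    obtain ⟨wk⟩ := C.conn.preconnected L.a x
    exact hwalk _ _ wk (Or.inl rfl)

  -- distinctness of the ten vertices
  have q01 : L.a ≠ L.b := (L.ab).ne
  have q02 : L.a ≠ L.c := by
    intro h
    have hp : G.Adj L.c L.d := L.cd
    rw [← h] at hp
    exact L.ad hp
  have q03 : L.a ≠ L.d := by
    intro h
    have hp : G.Adj L.a L.b := L.ab
    rw [h] at hp
    exact (fun hq => L.bd hq.symm) hp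
  have q04 : L.a ≠ L.e := by
    intro h
    have hp : G.Adj L.a L.b := L.ab
    rw [h] at hp
    exact (fun hq => L.be hq.symm) hp
  have q05 : L.a ≠ L.f := (L.fa.symm).ne
  have q06 : L.a ≠ t0 := (ht0a.symm).ne
  have q07 : L.a ≠ t1 := by
    intro h
    have hp : G.Adj t1 L.e := (ht1e.symm).symm
    rw [← h] at hp
    exact L.ae hp
  have q08 : L.a ≠ t2 := by
    intro h
    have hp : G.Adj L.a L.b := L.ab
    rw [h] at hp
    exact (fun hq => (fun hq => ht2nb hq.symm) hq.symm) hp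
  have q09 : L.a ≠ hh := by
    intro h
    have hp : G.Adj L.a L.b := L.ab
    rw [h] at hp
    exact (fun hq => (fun hq => hHb hq.symm) hq.symm) hp
  have q12 : L.b ≠ L.c := (L.bc).ne
  have q13 : L.b ≠ L.d := by
    intro h
    have hp : G.Adj L.b L.a := (L.ab).symm
    rw [h] at hp
    exact (fun hq => L.ad hq.symm) hp
  have q14 : L.b ≠ L.e := by
    intro h
    have hp : G.Adj L.b L.a := (L.ab).symm
    rw [h] at hp
    exact (fun hq => L.ae hq.symm) hp
  have q15 : L.b ≠ L.f := by
    intro h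
    have hp : G.Adj L.b L.c := L.bc
    rw [h] at hp
    exact (fun hq => L.cf hq.symm) hp
  have q16 : L.b ≠ t0 := by
    intro h
    have hp : G.Adj L.b L.c := L.bc
    rw [h] at hp
    exact (fun hq => (fun hq => ht0nc hq.symm) hq.symm) hp
  have q17 : L.b ≠ t1 := (ht1b.symm).ne
  have q18 : L.b ≠ t2 := by
    intro h
    have hp : G.Adj L.b L.a := (L.ab).symm
    rw [h] at hp
    exact (fun hq => (fun hq => ht2na hq.symm) hq.symm) hp
  have q19 : L.b ≠ hh := by
    intro h
    have hp : G.Adj L.b L.a := (L.ab).symm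
    rw [h] at hp
    exact (fun hq => (fun hq => hHa hq.symm) hq.symm) hp
  have q23 : L.c ≠ L.d := (L.cd).ne
  have q24 : L.c ≠ L.e := by
    intro h
    have hp : G.Adj L.c L.b := (L.bc).symm
    rw [h] at hp
    exact (fun hq => L.be hq.symm) hp
  have q25 : L.c ≠ L.f := by
    intro h
    have hp : G.Adj L.f L.a := (L.fa.symm).symm
    rw [← h] at hp
    exact (fun hq => L.ac hq.symm) hp
  have q26 : L.c ≠ t0 := by
    intro h
    have hp : G.Adj t0 L.a := (ht0a.symm).symm
    rw [← h] at hp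
    exact (fun hq => L.ac hq.symm) hp
  have q27 : L.c ≠ t1 := by
    intro h
    have hp : G.Adj L.c L.d := L.cd
    rw [h] at hp
    exact (fun hq => (fun hq => ht1nd hq.symm) hq.symm) hp
  have q28 : L.c ≠ t2 := (ht2c.symm).ne
  have q29 : L.c ≠ hh := by
    intro h
    have hp : G.Adj L.c L.b := (L.bc).symm
    rw [h] at hp
    exact (fun hq => (fun hq => hHb hq.symm) hq.symm) hp
  have q34 : L.d ≠ L.e := (L.de).ne
  have q35 : L.d ≠ L.f := by
    intro h
    have hp : G.Adj L.f L.a := (L.fa.symm).symm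
    rw [← h] at hp
    exact (fun hq => L.ad hq.symm) hp
  have q36 : L.d ≠ t0 := (ht0d.symm).ne
  have q37 : L.d ≠ t1 := by
    intro h
    have hp : G.Adj t1 L.b := (ht1b.symm).symm
    rw [← h] at hp
    exact (fun hq => L.bd hq.symm) hp
  have q38 : L.d ≠ t2 := by
    intro h
    have hp : G.Adj L.d L.e := L.de
    rw [h] at hp
    exact (fun hq => (fun hq => ht2ne hq.symm) hq.symm) hp
  have q39 : L.d ≠ hh := by
    intro h
    have hp : G.Adj L.d L.c := (L.cd).symm
    rw [h] at hp
    exact (fun hq => (fun hq => hHc hq.symm) hq.symm) hp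
  have q45 : L.e ≠ L.f := (L.ef).ne
  have q46 : L.e ≠ t0 := by
    intro h
    have hp : G.Adj t0 L.a := (ht0a.symm).symm
    rw [← h] at hp
    exact (fun hq => L.ae hq.symm) hp
  have q47 : L.e ≠ t1 := (ht1e.symm).ne
  have q48 : L.e ≠ t2 := by
    intro h
    have hp : G.Adj t2 L.c := (ht2c.symm).symm
    rw [← h] at hp
    exact (fun hq => L.ce hq.symm) hp
  have q49 : L.e ≠ hh := by
    intro h
    have hp : G.Adj L.e L.d := (L.de).symm
    rw [h] at hp
    exact (fun hq => (fun hq => hHd hq.symm) hq.symm) hp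
  have q56 : L.f ≠ t0 := by
    intro h
    have hp : G.Adj t0 L.d := (ht0d.symm).symm
    rw [← h] at hp
    exact (fun hq => L.df hq.symm) hp
  have q57 : L.f ≠ t1 := by
    intro h
    have hp : G.Adj L.f L.a := (L.fa.symm).symm
    rw [h] at hp
    exact (fun hq => (fun hq => ht1na hq.symm) hq.symm) hp
  have q58 : L.f ≠ t2 := (ht2f.symm).ne
  have q59 : L.f ≠ hh := by
    intro h
    have hp : G.Adj L.f L.a := (L.fa.symm).symm
    rw [h] at hp
    exact (fun hq => (fun hq => hHa hq.symm) hq.symm) hp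
  have q67 : t0 ≠ t1 := by
    intro h
    have hp : G.Adj t0 L.a := (ht0a.symm).symm
    rw [h] at hp
    exact (fun hq => (fun hq => ht1na hq.symm) hq.symm) hp
  have q68 : t0 ≠ t2 := by
    intro h
    have hp : G.Adj t0 L.a := (ht0a.symm).symm
    rw [h] at hp
    exact (fun hq => (fun hq => ht2na hq.symm) hq.symm) hp
  have q69 : t0 ≠ hh := (ht0h).ne
  have q78 : t1 ≠ t2 := by
    intro h
    have hp : G.Adj t1 L.b := (ht1b.symm).symm
    rw [h] at hp
    exact (fun hq => (fun hq => ht2nb hq.symm) hq.symm) hp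
  have q79 : t1 ≠ hh := (hht1.symm).ne
  have q89 : t2 ≠ hh := (hht2.symm).ne
  have hFinj : Function.Injective (![L.a, L.b, L.c, L.d, L.e, L.f, t0, t1, t2, hh] : Fin 10 → V) := by
    intro i j hij
    fin_cases i <;> fin_cases j
    · rfl
    · exact absurd (show L.a = L.b from hij) q01
    · exact absurd (show L.a = L.c from hij) q02
    · exact absurd (show L.a = L.d from hij) q03
    · exact absurd (show L.a = L.e from hij) q04
    · exact absurd (show L.a = L.f from hij) q05
    · exact absurd (show L.a = t0 from hij) q06
    · exact absurd (show L.a = t1 from hij) q07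
    · exact absurd (show L.a = t2 from hij) q08
    · exact absurd (show L.a = hh from hij) q09
    · exact absurd (show L.b = L.a from hij) (fun hq => q01 hq.symm)
    · rfl
    · exact absurd (show L.b = L.c from hij) q12
    · exact absurd (show L.b = L.d from hij) q13
    · exact absurd (show L.b = L.e from hij) q14
    · exact absurd (show L.b = L.f from hij) q15
    · exact absurd (show L.b = t0 from hij) q16
    · exact absurd (show L.b = t1 from hij) q17
    · exact absurd (show L.b = t2 from hij) q18
    · exact absurd (show L.b = hh from hij) q19
    · exact absurd (show L.c = L.a from hij) (fun hq => q02 hq.symm)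
    · exact absurd (show L.c = L.b from hij) (fun hq => q12 hq.symm)
    · rfl
    · exact absurd (show L.c = L.d from hij) q23
    · exact absurd (show L.c = L.e from hij) q24
    · exact absurd (show L.c = L.f from hij) q25
    · exact absurd (show L.c = t0 from hij) q26
    · exact absurd (show L.c = t1 from hij) q27
    · exact absurd (show L.c = t2 from hij) q28
    · exact absurd (show L.c = hh from hij) q29
    · exact absurd (show L.d = L.a from hij) (fun hq => q03 hq.symm)
    · exact absurd (show L.d = L.b from hij) (fun hq => q13 hq.symm)
    · exact absurd (show L.d = L.c from hij) (fun hq => q23 hq.symm)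
    · rfl
    · exact absurd (show L.d = L.e from hij) q34
    · exact absurd (show L.d = L.f from hij) q35
    · exact absurd (show L.d = t0 from hij) q36
    · exact absurd (show L.d = t1 from hij) q37
    · exact absurd (show L.d = t2 from hij) q38
    · exact absurd (show L.d = hh from hij) q39
    · exact absurd (show L.e = L.a from hij) (fun hq => q04 hq.symm)
    · exact absurd (show L.e = L.b from hij) (fun hq => q14 hq.symm)
    · exact absurd (show L.e = L.c from hij) (fun hq => q24 hq.symm)
    · exact absurd (show L.e = L.d from hij) (fun hq => q34 hq.symm)
    · rfl
    · exact absurd (show L.e = L.f from hij) q45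
    · exact absurd (show L.e = t0 from hij) q46
    · exact absurd (show L.e = t1 from hij) q47
    · exact absurd (show L.e = t2 from hij) q48
    · exact absurd (show L.e = hh from hij) q49
    · exact absurd (show L.f = L.a from hij) (fun hq => q05 hq.symm)
    · exact absurd (show L.f = L.b from hij) (fun hq => q15 hq.symm)
    · exact absurd (show L.f = L.c from hij) (fun hq => q25 hq.symm)
    · exact absurd (show L.f = L.d from hij) (fun hq => q35 hq.symm)
    · exact absurd (show L.f = L.e from hij) (fun hq => q45 hq.symm)
    · rfl
    · exact absurd (show L.f = t0 from hij) q56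
    · exact absurd (show L.f = t1 from hij) q57
    · exact absurd (show L.f = t2 from hij) q58
    · exact absurd (show L.f = hh from hij) q59
    · exact absurd (show t0 = L.a from hij) (fun hq => q06 hq.symm)
    · exact absurd (show t0 = L.b from hij) (fun hq => q16 hq.symm)
    · exact absurd (show t0 = L.c from hij) (fun hq => q26 hq.symm)
    · exact absurd (show t0 = L.d from hij) (fun hq => q36 hq.symm)
    · exact absurd (show t0 = L.e from hij) (fun hq => q46 hq.symm)
    · exact absurd (show t0 = L.f from hij) (fun hq => q56 hq.symm)
    · rfl
    · exact absurd (show t0 = t1 from hij) q67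
    · exact absurd (show t0 = t2 from hij) q68
    · exact absurd (show t0 = hh from hij) q69
    · exact absurd (show t1 = L.a from hij) (fun hq => q07 hq.symm)
    · exact absurd (show t1 = L.b from hij) (fun hq => q17 hq.symm)
    · exact absurd (show t1 = L.c from hij) (fun hq => q27 hq.symm)
    · exact absurd (show t1 = L.d from hij) (fun hq => q37 hq.symm)
    · exact absurd (show t1 = L.e from hij) (fun hq => q47 hq.symm)
    · exact absurd (show t1 = L.f from hij) (fun hq => q57 hq.symm)
    · exact absurd (show t1 = t0 from hij) (fun hq => q67 hq.symm)
    · rfl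
    · exact absurd (show t1 = t2 from hij) q78
    · exact absurd (show t1 = hh from hij) q79
    · exact absurd (show t2 = L.a from hij) (fun hq => q08 hq.symm)
    · exact absurd (show t2 = L.b from hij) (fun hq => q18 hq.symm)
    · exact absurd (show t2 = L.c from hij) (fun hq => q28 hq.symm)
    · exact absurd (show t2 = L.d from hij) (fun hq => q38 hq.symm)
    · exact absurd (show t2 = L.e from hij) (fun hq => q48 hq.symm)
    · exact absurd (show t2 = L.f from hij) (fun hq => q58 hq.symm)
    · exact absurd (show t2 = t0 from hij) (fun hq => q68 hq.symm)
    · exact absurd (show t2 = t1 from hij) (fun hq => q78 hq.symm)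
    · rfl
    · exact absurd (show t2 = hh from hij) q89
    · exact absurd (show hh = L.a from hij) (fun hq => q09 hq.symm)
    · exact absurd (show hh = L.b from hij) (fun hq => q19 hq.symm)
    · exact absurd (show hh = L.c from hij) (fun hq => q29 hq.symm)
    · exact absurd (show hh = L.d from hij) (fun hq => q39 hq.symm)
    · exact absurd (show hh = L.e from hij) (fun hq => q49 hq.symm)
    · exact absurd (show hh = L.f from hij) (fun hq => q59 hq.symm)
    · exact absurd (show hh = t0 from hij) (fun hq => q69 hq.symm)
    · exact absurd (show hh = t1 from hij) (fun hq => q79 hq.symm)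
    · exact absurd (show hh = t2 from hij) (fun hq => q89 hq.symm)
    · rfl

  have hFsurj : Function.Surjective (![L.a, L.b, L.c, L.d, L.e, L.f, t0, t1, t2, hh] : Fin 10 → V) := by
    intro x
    rcases hU x with rfl | rfl | rfl | rfl | rfl | rfl | rfl | rfl | rfl | rfl
    · exact ⟨0, rfl⟩
    · exact ⟨1, rfl⟩
    · exact ⟨2, rfl⟩
    · exact ⟨3, rfl⟩
    · exact ⟨4, rfl⟩
    · exact ⟨5, rfl⟩
    · exact ⟨6, rfl⟩
    · exact ⟨7, rfl⟩
    · exact ⟨8, rfl⟩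
    · exact ⟨9, rfl⟩
  have hM : Function.Bijective (![⟨{0,4}, by decide⟩, ⟨{1,3}, by decide⟩, ⟨{0,2}, by decide⟩,
      ⟨{1,4}, by decide⟩, ⟨{0,3}, by decide⟩, ⟨{1,2}, by decide⟩, ⟨{2,3}, by decide⟩,
      ⟨{2,4}, by decide⟩, ⟨{3,4}, by decide⟩, ⟨{0,1}, by decide⟩] :
      Fin 10 → {s : Finset (Fin 5) // s.card = 2}) := by
    constructor
    · intro i j hij
      fin_cases i <;> fin_cases j <;> first | rfl | (exact absurd hij (by decide))
    · decide
  refine ⟨⟨(Equiv.ofBijective _ ⟨hFinj, hFsurj⟩).symm.trans (Equiv.ofBijective _ hM), ?_⟩⟩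
  intro x y
  rcases hFsurj x with ⟨i, rfl⟩
  rcases hFsurj y with ⟨j, rfl⟩
  simp only [Equiv.trans_apply, Equiv.ofBijective_symm_apply_apply, Equiv.ofBijective_apply]
  erw [Equiv.ofBijective_symm_apply_apply, Equiv.ofBijective_symm_apply_apply]
  fin_cases i <;> fin_cases j
  · exact iff_of_false (by decide) (G.irrefl)
  · exact iff_of_true (by decide) (L.ab)
  · exact iff_of_false (by decide) (L.ac)
  · exact iff_of_false (by decide) (L.ad)
  · exact iff_of_false (by decide) (L.ae)
  · exact iff_of_true (by decide) (L.fa.symm)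
  · exact iff_of_true (by decide) (ht0a.symm)
  · exact iff_of_false (by decide) ((fun h => ht1na h.symm))
  · exact iff_of_false (by decide) ((fun h => ht2na h.symm))
  · exact iff_of_false (by decide) ((fun h => hHa h.symm))
  · exact iff_of_true (by decide) ((L.ab).symm)
  · exact iff_of_false (by decide) (G.irrefl)
  · exact iff_of_true (by decide) (L.bc)
  · exact iff_of_false (by decide) (L.bd)
  · exact iff_of_false (by decide) (L.be)
  · exact iff_of_false (by decide) (L.bf)
  · exact iff_of_false (by decide) ((fun h => ht0nb h.symm))
  · exact iff_of_true (by decide) (ht1b.symm)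
  · exact iff_of_false (by decide) ((fun h => ht2nb h.symm))
  · exact iff_of_false (by decide) ((fun h => hHb h.symm))
  · exact iff_of_false (by decide) ((fun h => L.ac h.symm))
  · exact iff_of_true (by decide) ((L.bc).symm)
  · exact iff_of_false (by decide) (G.irrefl)
  · exact iff_of_true (by decide) (L.cd)
  · exact iff_of_false (by decide) (L.ce)
  · exact iff_of_false (by decide) (L.cf)
  · exact iff_of_false (by decide) ((fun h => ht0nc h.symm))
  · exact iff_of_false (by decide) ((fun h => ht1nc h.symm))
  · exact iff_of_true (by decide) (ht2c.symm)
  · exact iff_of_false (by decide) ((fun h => hHc h.symm))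
  · exact iff_of_false (by decide) ((fun h => L.ad h.symm))
  · exact iff_of_false (by decide) ((fun h => L.bd h.symm))
  · exact iff_of_true (by decide) ((L.cd).symm)
  · exact iff_of_false (by decide) (G.irrefl)
  · exact iff_of_true (by decide) (L.de)
  · exact iff_of_false (by decide) (L.df)
  · exact iff_of_true (by decide) (ht0d.symm)
  · exact iff_of_false (by decide) ((fun h => ht1nd h.symm))
  · exact iff_of_false (by decide) ((fun h => ht2nd h.symm))
  · exact iff_of_false (by decide) ((fun h => hHd h.symm))
  · exact iff_of_false (by decide) ((fun h => L.ae h.symm))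
  · exact iff_of_false (by decide) ((fun h => L.be h.symm))
  · exact iff_of_false (by decide) ((fun h => L.ce h.symm))
  · exact iff_of_true (by decide) ((L.de).symm)
  · exact iff_of_false (by decide) (G.irrefl)
  · exact iff_of_true (by decide) (L.ef)
  · exact iff_of_false (by decide) ((fun h => ht0ne h.symm))
  · exact iff_of_true (by decide) (ht1e.symm)
  · exact iff_of_false (by decide) ((fun h => ht2ne h.symm))
  · exact iff_of_false (by decide) ((fun h => hHe h.symm))
  · exact iff_of_true (by decide) ((L.fa.symm).symm)
  · exact iff_of_false (by decide) ((fun h => L.bf h.symm))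
  · exact iff_of_false (by decide) ((fun h => L.cf h.symm))
  · exact iff_of_false (by decide) ((fun h => L.df h.symm))
  · exact iff_of_true (by decide) ((L.ef).symm)
  · exact iff_of_false (by decide) (G.irrefl)
  · exact iff_of_false (by decide) ((fun h => ht0nf h.symm))
  · exact iff_of_false (by decide) ((fun h => ht1nf h.symm))
  · exact iff_of_true (by decide) (ht2f.symm)
  · exact iff_of_false (by decide) ((fun h => hHf h.symm))
  · exact iff_of_true (by decide) ((ht0a.symm).symm)
  · exact iff_of_false (by decide) ((fun h => (fun h => ht0nb h.symm) h.symm))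
  · exact iff_of_false (by decide) ((fun h => (fun h => ht0nc h.symm) h.symm))
  · exact iff_of_true (by decide) ((ht0d.symm).symm)
  · exact iff_of_false (by decide) ((fun h => (fun h => ht0ne h.symm) h.symm))
  · exact iff_of_false (by decide) ((fun h => (fun h => ht0nf h.symm) h.symm))
  · exact iff_of_false (by decide) (G.irrefl)
  · exact iff_of_false (by decide) (hnt01)
  · exact iff_of_false (by decide) (hnt02)
  · exact iff_of_true (by decide) (ht0h)
  · exact iff_of_false (by decide) ((fun h => (fun h => ht1na h.symm) h.symm))
  · exact iff_of_true (by decide) ((ht1b.symm).symm)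
  · exact iff_of_false (by decide) ((fun h => (fun h => ht1nc h.symm) h.symm))
  · exact iff_of_false (by decide) ((fun h => (fun h => ht1nd h.symm) h.symm))
  · exact iff_of_true (by decide) ((ht1e.symm).symm)
  · exact iff_of_false (by decide) ((fun h => (fun h => ht1nf h.symm) h.symm))
  · exact iff_of_false (by decide) ((fun h => hnt01 h.symm))
  · exact iff_of_false (by decide) (G.irrefl)
  · exact iff_of_false (by decide) (hnt12)
  · exact iff_of_true (by decide) (hht1.symm)
  · exact iff_of_false (by decide) ((fun h => (fun h => ht2na h.symm) h.symm))
  · exact iff_of_false (by decide) ((fun h => (fun h => ht2nb h.symm) h.symm))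
  · exact iff_of_true (by decide) ((ht2c.symm).symm)
  · exact iff_of_false (by decide) ((fun h => (fun h => ht2nd h.symm) h.symm))
  · exact iff_of_false (by decide) ((fun h => (fun h => ht2ne h.symm) h.symm))
  · exact iff_of_true (by decide) ((ht2f.symm).symm)
  · exact iff_of_false (by decide) ((fun h => hnt02 h.symm))
  · exact iff_of_false (by decide) ((fun h => hnt12 h.symm))
  · exact iff_of_false (by decide) (G.irrefl)
  · exact iff_of_true (by decide) (hht2.symm)
  · exact iff_of_false (by decide) ((fun h => (fun h => hHa h.symm) h.symm))
  · exact iff_of_false (by decide) ((fun h => (fun h => hHb h.symm) h.symm))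
  · exact iff_of_false (by decide) ((fun h => (fun h => hHc h.symm) h.symm))
  · exact iff_of_false (by decide) ((fun h => (fun h => hHd h.symm) h.symm))
  · exact iff_of_false (by decide) ((fun h => (fun h => hHe h.symm) h.symm))
  · exact iff_of_false (by decide) ((fun h => (fun h => hHf h.symm) h.symm))
  · exact iff_of_true (by decide) ((ht0h).symm)
  · exact iff_of_true (by decide) ((hht1.symm).symm)
  · exact iff_of_true (by decide) ((hht2.symm).symm)
  · exact iff_of_false (by decide) (G.irrefl)

end Endgame

theorem stmt_15 {V : Type*} [Fintype V] (G : SimpleGraph V) (hconn : G.Connected)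
    (hP7 : IndFree G (pathGraph 7)) (hC7 : IndFree G (cycleGraph 7))
    (hC4 : IndFree G (cycleGraph 4)) (hdiamond : IndFree G diamondGraph)
    (hC6 : Nonempty (cycleGraph 6 ↪g G)) :
    HasCliqueCutset G ∨ (∃ v : V, (G.neighborSet v).ncard ≤ 2) ∨
      Nonempty (G ≃g petersenGraph) := by
  by_cases hcut : HasCliqueCutset G
  · exact Or.inl hcut
  by_cases hdeg : ∃ v : V, (G.neighborSet v).ncard ≤ 2
  · exact Or.inr (Or.inl hdeg)
  push_neg at hdeg
  obtain ⟨e6⟩ := hC6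
  have hadj : ∀ i j : Fin 6, (cycleGraph 6).Adj i j → G.Adj (e6 i) (e6 j) :=
    fun i j h => e6.map_rel_iff.mpr h
  have hnadj : ∀ i j : Fin 6, ¬ (cycleGraph 6).Adj i j → ¬ G.Adj (e6 i) (e6 j) :=
    fun i j h hq => h (e6.map_rel_iff.mp hq)
  exact Or.inr (Or.inr (petersen_case ⟨hconn, hP7, hC7, hC4, hdiamond, hcut, hdeg⟩
    ⟨e6 0, e6 1, e6 2, e6 3, e6 4, e6 5,
     hadj 0 1 (by decide), hadj 1 2 (by decide), hadj 2 3 (by decide), hadj 3 4 (by decide),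
     hadj 4 5 (by decide), hadj 5 0 (by decide),
     hnadj 0 2 (by decide), hnadj 0 3 (by decide), hnadj 0 4 (by decide),
     hnadj 1 3 (by decide), hnadj 1 4 (by decide), hnadj 1 5 (by decide),
     hnadj 2 4 (by decide), hnadj 2 5 (by decide), hnadj 3 5 (by decide)⟩))
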